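/- arXiv:1310.2032 — 11 statements merged into one kernel-verified Lean document; each statement's English description precedes it below -/
import Mathlib

section
/- The power graph of a finite group G is complete if and only if G is cyclic of order 1 or p^m for some prime p and natural number m. -/
def powerGraph (G : Type*) [Group G] : SimpleGraph G where
  Adj x y := x ≠ y ∧ ((∃ m : ℕ, 0 < m ∧ y = x ^ m) ∨ (∃ m : ℕ, 0 < m ∧ x = y ^ m))
  symm := ⟨fun x y h => ⟨h.1.symm, h.2.symm⟩⟩
  loopless := ⟨fun x h => h.1 rfl⟩

def powerGraphStar (G : Type*) [Group G] : SimpleGraph {g : G // g ≠ 1} :=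
  (powerGraph G).induce {g : G | g ≠ 1}

open Subgroup in
/-- In a finite group, membership in zpowers gives a positive power. -/
lemma exists_pos_pow_of_mem_zpowers {G : Type*} [Group G] [Fintype G] {x y : G}
    (h : x ∈ Subgroup.zpowers y) : ∃ m : ℕ, 0 < m ∧ x = y ^ m := by
  have hy : IsOfFinOrder y := isOfFinOrder_of_finite y
  obtain ⟨m, hm⟩ := hy.mem_powers_iff_mem_zpowers.2 h
  rcases Nat.eq_zero_or_pos m with rfl | hm0
  · exact ⟨orderOf y, hy.orderOf_pos, by simp [pow_orderOf_eq_one, ← hm]⟩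
  · exact ⟨m, hm0, hm.symm⟩

theorem powerGraph_complete_iff (G : Type*) [Group G] [Fintype G] :
    powerGraph G = ⊤ ↔
      IsCyclic G ∧ (Fintype.card G = 1 ∨
        ∃ p m : ℕ, p.Prime ∧ Fintype.card G = p ^ m) := by
  classical
  constructor
  · intro h
    have adj : ∀ x y : G, x ≠ y →
        ((∃ m : ℕ, 0 < m ∧ y = x ^ m) ∨ (∃ m : ℕ, 0 < m ∧ x = y ^ m)) := by
      intro x y hxy
      have : (powerGraph G).Adj x y := by rw [h]; exact hxy
      exact this.2
    -- cyclicity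
    obtain ⟨g, -, hg⟩ := Finset.exists_max_image (Finset.univ : Finset G) orderOf
      ⟨1, Finset.mem_univ 1⟩
    have hcyc : IsCyclic G := by
      refine ⟨g, fun x => ?_⟩
      by_cases hx : x = g
      · subst hx; exact Subgroup.mem_zpowers x
      rcases adj g x (fun e => hx e.symm) with ⟨m, -, hm⟩ | ⟨m, -, hm⟩
      · exact hm ▸ ⟨(m : ℤ), by simp⟩
      · -- g = x ^ m, so orderOf g ∣ orderOf x and maximality forces equality
        have hdvd : orderOf g ∣ orderOf x := hm ▸ orderOf_pow_dvd m
        have hle : orderOf x ≤ orderOf g := hg x (Finset.mem_univ x)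
        have heq : orderOf x = orderOf g :=
          le_antisymm hle (Nat.le_of_dvd (orderOf_pos x) hdvd)
        have hsub : Subgroup.zpowers g ≤ Subgroup.zpowers x :=
          Subgroup.zpowers_le.2 (hm ▸ ⟨(m : ℤ), by simp⟩)
        have hcard : Nat.card (Subgroup.zpowers x) ≤ Nat.card (Subgroup.zpowers g) := by
          rw [Nat.card_zpowers, Nat.card_zpowers, heq]
        have heq2 := Subgroup.eq_of_le_of_card_ge hsub hcard
        show x ∈ Subgroup.zpowers g
        rw [heq2]
        exact Subgroup.mem_zpowers x
    refine ⟨hcyc, ?_⟩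
    -- prime power order
    set n := Fintype.card G with hn
    by_cases h1 : n = 1
    · exact Or.inl h1
    · have hn0 : n ≠ 0 := Fintype.card_ne_zero
      have hp : n.minFac.Prime := Nat.minFac_prime h1
      have huniq : ∀ {q : ℕ}, q.Prime → q ∣ n → q = n.minFac := by
        intro q hq hqn
        by_contra hne
        haveI := Fact.mk hp
        haveI := Fact.mk hq
        obtain ⟨x, hx⟩ := exists_prime_orderOf_dvd_card n.minFac (n.minFac_dvd)
        obtain ⟨y, hy⟩ := exists_prime_orderOf_dvd_card q hqn
        have hxy : x ≠ y := by
          intro e; apply hne; rw [← hy, ← hx, e]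
        rcases adj x y hxy with ⟨m, -, hm⟩ | ⟨m, -, hm⟩
        · have : orderOf y ∣ orderOf x := hm ▸ orderOf_pow_dvd m
          rw [hx, hy] at this
          exact hne ((Nat.prime_dvd_prime_iff_eq hq hp).1 this)
        · have : orderOf x ∣ orderOf y := hm ▸ orderOf_pow_dvd m
          rw [hx, hy] at this
          exact hne ((Nat.prime_dvd_prime_iff_eq hp hq).1 this).symm
      exact Or.inr ⟨n.minFac, n.primeFactorsList.length, hp,
        Nat.eq_prime_pow_of_unique_prime_dvd hn0 huniq⟩
  · rintro ⟨hcyc, hcard⟩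
    ext x y
    simp only [SimpleGraph.top_adj]
    constructor
    · exact fun h => h.1
    · intro hxy
      refine ⟨hxy, ?_⟩
      rcases hcard with h1 | ⟨p, m, hp, hpm⟩
      · exact absurd (Fintype.card_le_one_iff.1 h1.le x y) hxy
      -- cyclic p-group: cyclic subgroups are comparable
      have key : ∀ a b : G, orderOf a ∣ orderOf b → a ∈ Subgroup.zpowers b := by
        intro a b hdvd
        have hb0 : 0 < orderOf b := orderOf_pos b
        have ha : a ^ orderOf b = 1 := by
          obtain ⟨k, hk⟩ := hdvd
          rw [hk, pow_mul, pow_orderOf_eq_one, one_pow]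
        set S : Finset G := Finset.univ.filter (fun z => z ^ orderOf b = 1) with hSdef
        have hS : S.card ≤ orderOf b := by
          have := IsCyclic.card_pow_eq_one_le (α := G) hb0
          convert this using 2
        have hT : (Subgroup.zpowers b : Set G).toFinset ⊆ S := by
          intro z hz
          rw [Set.mem_toFinset] at hz
          obtain ⟨k, hk⟩ := isOfFinOrder_of_finite b |>.mem_powers_iff_mem_zpowers.2 hz
          simp only [hSdef, Finset.mem_filter, Finset.mem_univ, true_and]
          rw [← hk, ← pow_mul, mul_comm, pow_mul, pow_orderOf_eq_one, one_pow]
        have hTcard : (Subgroup.zpowers b : Set G).toFinset.card = orderOf b := by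
          rw [Set.toFinset_card, ← Nat.card_zpowers b, Nat.card_eq_fintype_card]
          exact Fintype.card_congr (Equiv.refl _)
        have hST : S = (Subgroup.zpowers b : Set G).toFinset :=
          (Finset.eq_of_subset_of_card_le hT (hTcard ▸ hS)).symm
        have haS : a ∈ S := by
          simp only [hSdef, Finset.mem_filter, Finset.mem_univ, true_and]; exact ha
        rw [hST, Set.mem_toFinset] at haS
        exact haS
      -- orders are powers of p, hence comparable
      obtain ⟨i, hi, hix⟩ := (Nat.dvd_prime_pow hp).1 (hpm ▸ orderOf_dvd_card (x := x))
      obtain ⟨j, hj, hjy⟩ := (Nat.dvd_prime_pow hp).1 (hpm ▸ orderOf_dvd_card (x := y))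
      rcases le_total i j with hij | hij
      · have hd : orderOf x ∣ orderOf y := by rw [hix, hjy]; exact pow_dvd_pow p hij
        exact Or.inr (exists_pos_pow_of_mem_zpowers (key x y hd))
      · have hd : orderOf y ∣ orderOf x := by rw [hix, hjy]; exact pow_dvd_pow p hij
        exact Or.inl (exists_pos_pow_of_mem_zpowers (key y x hd))
end

section
/- Let a and b be commuting elements of a group G such that neither o(a) divides o(b) nor o(b) divides o(a). Then a and b lie in the same connected component of the graph P*(G) obtained from the power graph of G by deleting the identity vertex. -/
lemma pg_reach {G : Type*} [Group G] {x y : G} (hx : x ≠ 1) (hy : y ≠ 1)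
    {m : ℕ} (hm : 0 < m) (h : y = x ^ m) :
    (powerGraphStar G).Reachable ⟨x, hx⟩ ⟨y, hy⟩ := by
  by_cases hxy : x = y
  · have : (⟨x, hx⟩ : {g : G // g ≠ 1}) = ⟨y, hy⟩ := Subtype.ext hxy
    rw [this]
  · exact SimpleGraph.Adj.reachable (show (powerGraph G).Adj x y from
      ⟨hxy, Or.inl ⟨m, hm, h⟩⟩)

lemma exists_prime_lt_factorization {m n : ℕ} (hm : m ≠ 0) (hn : n ≠ 0) (h : ¬ m ∣ n) :
    ∃ p : ℕ, p.Prime ∧ p ∣ m ∧ n.factorization p < m.factorization p := by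
  rw [← Nat.factorization_le_iff_dvd hm hn] at h
  simp only [Finsupp.le_def, not_forall, not_le] at h
  obtain ⟨p, hp⟩ := h
  have hpos : m.factorization p ≠ 0 := by omega
  exact ⟨p, Nat.prime_of_mem_primeFactors
      (Nat.support_factorization _ ▸ Finsupp.mem_support_iff.mpr hpos),
    Nat.dvd_of_factorization_pos hpos, hp⟩

lemma orderOf_pow_div_prime {G : Type*} [Group G] {a : G} {p : ℕ} (hp : p.Prime)
    (ho : orderOf a ≠ 0) (hpa : p ∣ orderOf a) :
    orderOf (a ^ (orderOf a / p)) = p := by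
  have hfin : IsOfFinOrder a := by
    rw [← orderOf_pos_iff]; omega
  rw [hfin.orderOf_pow, Nat.gcd_eq_right (Nat.div_dvd_of_dvd hpa),
    Nat.div_div_self hpa ho]

lemma pow_of_mul {G : Type*} [Group G] {u v : G} {p q : ℕ} (hp : p.Prime) (hq : q.Prime)
    (hpq : p ≠ q) (hu : orderOf u = p) (hv : orderOf v = q) (hcomm : Commute u v) :
    ∃ m : ℕ, 0 < m ∧ u = (u * v) ^ m := by
  haveI := Fact.mk hp
  have hq0 : (q : ZMod p) ≠ 0 := by
    intro h0
    rw [ZMod.natCast_eq_zero_iff] at h0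
    revert h0
    exact fun h => hpq ((Nat.prime_dvd_prime_iff_eq hp hq).mp h)
  set k := ((q : ZMod p)⁻¹).val with hk
  have hmod : q * k ≡ 1 [MOD p] := by
    have h1 : ((q * k : ℕ) : ZMod p) = ((1 : ℕ) : ZMod p) := by
      push_cast
      rw [hk, ZMod.natCast_rightInverse _, mul_inv_cancel₀ hq0]
    exact (ZMod.natCast_eq_natCast_iff _ _ _).mp h1
  have hm0 : 0 < q * k := by
    rcases Nat.eq_zero_or_pos (q * k) with h | h
    · exfalso
      rw [h] at hmod
      have hd : p ∣ 1 := (Nat.modEq_zero_iff_dvd).mp hmod.symm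
      exact hp.ne_one (Nat.dvd_one.mp hd)
    · exact h
  refine ⟨q * k, hm0, ?_⟩
  have hvq : v ^ (q * k) = 1 := by rw [pow_mul, ← hv, pow_orderOf_eq_one, one_pow]
  have huq : u ^ (q * k) = u := by
    have := (pow_eq_pow_iff_modEq (x := u) (n := q * k) (m := 1)).mpr (by rw [hu]; exact hmod)
    simpa using this
  rw [hcomm.mul_pow, huq, hvq, mul_one]

theorem commuting_incomparable_orders_same_component (G : Type*) [Group G] [Fintype G]
    (a b : G) (ha : a ≠ 1) (hb : b ≠ 1) (hcomm : a * b = b * a)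
    (hab : ¬ orderOf a ∣ orderOf b) (hba : ¬ orderOf b ∣ orderOf a) :
    (powerGraphStar G).Reachable ⟨a, ha⟩ ⟨b, hb⟩ := by
  have hC : Commute a b := hcomm
  have hoa : orderOf a ≠ 0 := (orderOf_pos a).ne'
  have hob : orderOf b ≠ 0 := (orderOf_pos b).ne'
  obtain ⟨p, hp, hpa, hplt⟩ := exists_prime_lt_factorization hoa hob hab
  obtain ⟨q, hq, hqb, hqlt⟩ := exists_prime_lt_factorization hob hoa hba
  have hpq : p ≠ q := fun h => by subst h; omega
  set u := a ^ (orderOf a / p) with hudef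
  set v := b ^ (orderOf b / q) with hvdef
  have hu : orderOf u = p := orderOf_pow_div_prime hp hoa hpa
  have hv : orderOf v = q := orderOf_pow_div_prime hq hob hqb
  have hcuv : Commute u v := hC.pow_pow _ _
  have hu1 : u ≠ 1 := by
    intro h; rw [h, orderOf_one] at hu; exact hp.ne_one hu.symm
  have hv1 : v ≠ 1 := by
    intro h; rw [h, orderOf_one] at hv; exact hq.ne_one hv.symm
  have hcop : Nat.Coprime (orderOf u) (orderOf v) := by
    rw [hu, hv]; exact (Nat.coprime_primes hp hq).mpr hpq
  have houv : orderOf (u * v) = p * q := by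
    rw [Commute.orderOf_mul_eq_mul_orderOf_of_coprime hcuv hcop, hu, hv]
  have huv1 : u * v ≠ 1 := by
    intro h; rw [h, orderOf_one] at houv
    nlinarith [hp.one_lt, hq.one_lt]
  obtain ⟨m₁, hm₁, hum⟩ := pow_of_mul hp hq hpq hu hv hcuv
  obtain ⟨m₂, hm₂, hvm⟩ := pow_of_mul hq hp hpq.symm hv hu hcuv.symm
  rw [← hcuv.eq] at hvm
  have r1 : (powerGraphStar G).Reachable ⟨a, ha⟩ ⟨u, hu1⟩ :=
    pg_reach ha hu1 (Nat.div_pos (Nat.le_of_dvd (orderOf_pos a) hpa) hp.pos) rfl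
  have r2 : (powerGraphStar G).Reachable ⟨u * v, huv1⟩ ⟨u, hu1⟩ :=
    pg_reach huv1 hu1 hm₁ hum
  have r3 : (powerGraphStar G).Reachable ⟨u * v, huv1⟩ ⟨v, hv1⟩ :=
    pg_reach huv1 hv1 hm₂ hvm
  have r4 : (powerGraphStar G).Reachable ⟨b, hb⟩ ⟨v, hv1⟩ :=
    pg_reach hb hv1 (Nat.div_pos (Nat.le_of_dvd (orderOf_pos b) hqb) hq.pos) rfl
  exact ((r1.trans r2.symm).trans r3).trans r4.symm
end

section
/- Let G be a cyclic group of order n generated by x. Then the degree of x^m in the power graph P(G) equals n/gcd(m,n) - 1 + the sum of φ(n/d) over all divisors d of gcd(m,n) with d ≠ gcd(m,n), where φ is Euler's totient function. -/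
open Finset Subgroup

lemma aux_div_dvd_div {d g n : ℕ} (hd : d ∣ g) (hg : g ∣ n) : n / g ∣ n / d := by
  rcases Nat.eq_zero_or_pos d with rfl | hd0
  · obtain rfl : g = 0 := Nat.eq_zero_of_zero_dvd hd
    obtain rfl : n = 0 := Nat.eq_zero_of_zero_dvd hg
    simp
  obtain ⟨c, rfl⟩ := hd
  obtain ⟨e, rfl⟩ := hg
  rcases Nat.eq_zero_or_pos c with rfl | hc0
  · simp
  have h1 : d * c * e / (d * c) = e := Nat.mul_div_cancel_left e (Nat.mul_pos hd0 hc0)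
  have h2 : d * c * e / d = c * e := by rw [mul_assoc, Nat.mul_div_cancel_left _ hd0]
  rw [h1, h2]
  exact dvd_mul_left e c

/-- In a finite group, positive-power reachability is zpowers membership. -/
lemma exists_pos_pow_iff_mem_zpowers {G : Type*} [Group G] [Fintype G] (y z : G) :
    (∃ j : ℕ, 0 < j ∧ z = y ^ j) ↔ z ∈ Subgroup.zpowers y := by
  constructor
  · rintro ⟨j, -, rfl⟩
    exact ⟨(j : ℤ), by simp⟩
  · intro hz
    obtain ⟨j, hj⟩ := mem_powers_iff_mem_zpowers.2 hz
    rcases Nat.eq_zero_or_pos j with rfl | hj0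
    · exact ⟨orderOf y, orderOf_pos y, by simpa [pow_orderOf_eq_one] using hj.symm⟩
    · exact ⟨j, hj0, hj.symm⟩

/-- In a finite cyclic group, membership in zpowers is divisibility of orders. -/
lemma mem_zpowers_iff_orderOf_dvd {G : Type*} [Group G] [Fintype G] [DecidableEq G]
    (hc : IsCyclic G) (y z : G) : z ∈ Subgroup.zpowers y ↔ orderOf z ∣ orderOf y := by
  constructor
  · intro hz
    obtain ⟨j, hj⟩ := mem_powers_iff_mem_zpowers.2 hz
    exact hj ▸ orderOf_pow_dvd j
  · intro hdvd
    have hk : 0 < orderOf y := orderOf_pos y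
    have hsub : (univ.filter (· ∈ Subgroup.zpowers y)) ⊆
        (univ.filter fun b : G => b ^ orderOf y = 1) := by
      intro b hb
      simp only [mem_filter, mem_univ, true_and] at hb ⊢
      obtain ⟨j, hj⟩ := mem_powers_iff_mem_zpowers.2 hb
      rw [← hj, ← pow_mul, mul_comm, pow_mul, pow_orderOf_eq_one, one_pow]
    have hcard1 : (univ.filter (· ∈ Subgroup.zpowers y)).card = orderOf y := by
      rw [← Fintype.card_zpowers (x := y)]
      exact (Fintype.card_subtype _).symm
    have hle : (univ.filter fun b : G => b ^ orderOf y = 1).card ≤ orderOf y :=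
      IsCyclic.card_pow_eq_one_le hk
    have heq : (univ.filter (· ∈ Subgroup.zpowers y)) =
        (univ.filter fun b : G => b ^ orderOf y = 1) :=
      Finset.eq_of_subset_of_card_le hsub (by omega)
    have hz1 : z ^ orderOf y = 1 := orderOf_dvd_iff_pow_eq_one.mp hdvd
    have : z ∈ (univ.filter fun b : G => b ^ orderOf y = 1) := by
      simp [hz1]
    rw [← heq] at this
    simpa using this

theorem degree_in_cyclic_powerGraph (G : Type*) [Group G] [Fintype G] (x : G)
    (hx : ∀ g : G, g ∈ Subgroup.zpowers x) (n : ℕ) (hn : Fintype.card G = n) (m : ℕ) :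
    ((powerGraph G).neighborSet (x ^ m)).ncard =
      n / Nat.gcd m n - 1 +
        ∑ d ∈ (Nat.gcd m n).divisors.erase (Nat.gcd m n), Nat.totient (n / d) := by
  classical
  have hcyc : IsCyclic G := ⟨⟨x, hx⟩⟩
  subst hn
  set n := Fintype.card G with hncard
  have hn0 : 0 < n := Fintype.card_pos
  set g := Nat.gcd m n with hgdef
  have hgdvd : g ∣ n := Nat.gcd_dvd_right m n
  have hg0 : 0 < g := Nat.gcd_pos_of_pos_right m hn0
  set y := x ^ m with hy
  have hox : orderOf x = n := by
    have := orderOf_eq_card_of_forall_mem_zpowers hx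
    rwa [Nat.card_eq_fintype_card] at this
  set k := orderOf y with hk
  have hkval : k = n / g := by
    rw [hk, hy, orderOf_pow, hox, Nat.gcd_comm]
  have hk0 : 0 < k := orderOf_pos y
  have hkdvd : k ∣ n := orderOf_dvd_card
  have hnk : n / k = g := by rw [hkval, Nat.div_div_self hgdvd hn0.ne']
  -- describe the neighbor set as a finset
  have hset : (powerGraph G).neighborSet y =
      ↑(univ.filter fun z : G => z ≠ y ∧ (orderOf z ∣ k ∨ k ∣ orderOf z)) := by
    ext z
    simp only [SimpleGraph.mem_neighborSet, powerGraph, Finset.coe_filter, Set.mem_setOf_eq,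
      mem_univ, true_and]
    constructor
    · rintro ⟨hne, h | h⟩
      · exact ⟨fun h' => hne (h' ▸ rfl), Or.inl
          ((mem_zpowers_iff_orderOf_dvd hcyc y z).1 ((exists_pos_pow_iff_mem_zpowers y z).1 h))⟩
      · exact ⟨fun h' => hne (h' ▸ rfl), Or.inr
          ((mem_zpowers_iff_orderOf_dvd hcyc z y).1 ((exists_pos_pow_iff_mem_zpowers z y).1 h))⟩
    · rintro ⟨hne, h | h⟩
      · exact ⟨fun h' => hne (h' ▸ rfl), Or.inl
          ((exists_pos_pow_iff_mem_zpowers y z).2 ((mem_zpowers_iff_orderOf_dvd hcyc y z).2 h))⟩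
      · exact ⟨fun h' => hne (h' ▸ rfl), Or.inr
          ((exists_pos_pow_iff_mem_zpowers z y).2 ((mem_zpowers_iff_orderOf_dvd hcyc z y).2 h))⟩
  rw [hset, Set.ncard_coe_finset]
  -- split the filter into two disjoint pieces
  have hsplit : (univ.filter fun z : G => z ≠ y ∧ (orderOf z ∣ k ∨ k ∣ orderOf z)) =
      (univ.filter fun z : G => orderOf z ∣ k ∧ z ≠ y) ∪
      (univ.filter fun z : G => k ∣ orderOf z ∧ orderOf z ≠ k) := by
    ext z
    simp only [mem_union, mem_filter, mem_univ, true_and]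
    constructor
    · rintro ⟨hne, h | h⟩
      · exact Or.inl ⟨h, hne⟩
      · by_cases h2 : orderOf z ∣ k
        · exact Or.inl ⟨h2, hne⟩
        · exact Or.inr ⟨h, fun he => h2 (he ▸ dvd_rfl)⟩
    · rintro (⟨h1, h2⟩ | ⟨h1, h2⟩)
      · exact ⟨h2, Or.inl h1⟩
      · exact ⟨fun he => h2 (he ▸ rfl), Or.inr h1⟩
  have hdisj : Disjoint (univ.filter fun z : G => orderOf z ∣ k ∧ z ≠ y)
      (univ.filter fun z : G => k ∣ orderOf z ∧ orderOf z ≠ k) := by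
    rw [Finset.disjoint_left]
    intro z h1 h2
    simp only [mem_filter, mem_univ, true_and] at h1 h2
    exact h2.2 (Nat.dvd_antisymm (h1.1.trans dvd_rfl) h2.1 ▸ rfl)
  rw [hsplit, Finset.card_union_of_disjoint hdisj]
  congr 1
  -- first piece: k - 1 elements
  · have hA : (univ.filter fun z : G => orderOf z ∣ k ∧ z ≠ y) =
        (univ.filter fun z : G => orderOf z ∣ k).erase y := by
      ext z
      simp only [mem_erase, mem_filter, mem_univ, true_and]
      tauto
    have hcardfil : (univ.filter fun z : G => orderOf z ∣ k).card = k := by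
      have : (univ.filter fun z : G => orderOf z ∣ k) =
          (univ.filter (· ∈ Subgroup.zpowers y)) := by
        ext z
        simp [mem_zpowers_iff_orderOf_dvd hcyc y z, hk]
      rw [this, hk, ← Fintype.card_zpowers (x := y)]
      exact (Fintype.card_subtype _).symm
    rw [hA, Finset.card_erase_of_mem (by simp [hk]), hcardfil, hkval]
  -- second piece: sum of totients
  · have ht : ∀ z : G, (k ∣ orderOf z ∧ orderOf z ≠ k) →
        orderOf z ∈ n.divisors.filter fun e => k ∣ e ∧ e ≠ k := by
      intro z hz
      simp only [mem_filter, Nat.mem_divisors]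
      exact ⟨⟨orderOf_dvd_card, hn0.ne'⟩, hz⟩
    have hB : (univ.filter fun z : G => k ∣ orderOf z ∧ orderOf z ≠ k).card =
        ∑ e ∈ n.divisors.filter (fun e => k ∣ e ∧ e ≠ k), Nat.totient e := by
      rw [Finset.card_eq_sum_card_fiberwise (f := orderOf)
        (t := n.divisors.filter fun e => k ∣ e ∧ e ≠ k)
        (fun z hz => ht z (by simpa using (mem_filter.1 hz).2))]
      refine Finset.sum_congr rfl fun e he => ?_
      simp only [mem_filter, Nat.mem_divisors] at he
      have : ((univ.filter fun z : G => k ∣ orderOf z ∧ orderOf z ≠ k).filter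
          fun z => orderOf z = e) = univ.filter fun z : G => orderOf z = e := by
        ext z
        simp only [mem_filter, mem_univ, true_and]
        constructor
        · tauto
        · intro hz
          exact ⟨⟨hz ▸ he.2.1, hz ▸ he.2.2⟩, hz⟩
      rw [this]
      exact hcyc.card_orderOf_eq_totient he.1.1
    rw [hB]
    refine (Finset.sum_nbij' (fun d => n / d) (fun e => n / e) ?_ ?_ ?_ ?_ ?_).symm
    · intro d hd
      simp only [mem_erase, Nat.mem_divisors] at hd
      obtain ⟨hdg, hddvd, -⟩ := hd
      simp only [mem_filter, Nat.mem_divisors]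
      refine ⟨⟨Nat.div_dvd_of_dvd (hddvd.trans hgdvd), hn0.ne'⟩,
        hkval ▸ aux_div_dvd_div hddvd hgdvd, ?_⟩
      intro he
      apply hdg
      have h1 : n / (n / d) = d := Nat.div_div_self (hddvd.trans hgdvd) hn0.ne'
      rw [← h1, he, hnk]
    · intro e he
      simp only [mem_filter, Nat.mem_divisors] at he
      obtain ⟨⟨hedvd, -⟩, hke, hek⟩ := he
      simp only [mem_erase, Nat.mem_divisors]
      refine ⟨?_, hnk ▸ aux_div_dvd_div hke hedvd, hg0.ne'⟩
      intro hcontra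
      apply hek
      have h1 : n / (n / e) = e := Nat.div_div_self hedvd hn0.ne'
      rw [← h1, hcontra, ← hnk, Nat.div_div_self hkdvd hn0.ne']
    · intro d hd
      simp only [mem_erase, Nat.mem_divisors] at hd
      exact Nat.div_div_self (hd.2.1.trans hgdvd) hn0.ne'
    · intro e he
      simp only [mem_filter, Nat.mem_divisors] at he
      exact Nat.div_div_self he.1.1 hn0.ne'
    · intro d _
      rfl
end

section
/- Let G be a finite p-group. Then the graph P*(G), obtained from the power graph of G by deleting the identity, is connected if and only if G has a unique minimal subgroup. -/
section Aux

variable {p : ℕ} {G : Type*} [Group G] [Fintype G]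

/-- power of x of order p -/
noncomputable def elemP (p : ℕ) (x : G) : G := x ^ (orderOf x / p)

theorem exists_pow_order (hp : p.Prime) (hG : IsPGroup p G) (x : G) (hx : x ≠ 1) :
    ∃ k : ℕ, orderOf x = p ^ (k + 1) := by
  haveI := Fact.mk hp
  obtain ⟨k, hk⟩ := IsPGroup.iff_orderOf.mp hG x
  cases k with
  | zero => simp at hk; exact absurd hk hx
  | succ n => exact ⟨n, hk⟩

theorem elemP_spec (hp : p.Prime) (hG : IsPGroup p G) (x : G) (hx : x ≠ 1) :
    orderOf (elemP p x) = p ∧ elemP p x ∈ Subgroup.zpowers x ∧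
      0 < orderOf x / p := by
  obtain ⟨k, hk⟩ := exists_pow_order hp hG x hx
  have hdiv : orderOf x / p = p ^ k := by
    rw [hk, pow_succ, Nat.mul_div_cancel _ hp.pos]
  have hpow : (elemP p x) ^ p = 1 := by
    rw [elemP, ← pow_mul, hdiv, ← pow_succ, ← hk, pow_orderOf_eq_one]
  have hne : elemP p x ≠ 1 := by
    intro h
    have : orderOf x ∣ p ^ k := by
      rw [elemP, hdiv] at h
      exact orderOf_dvd_of_pow_eq_one h
    rw [hk] at this
    exact absurd (Nat.le_of_dvd (pow_pos hp.pos _) this)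
      (by simpa using Nat.pow_lt_pow_succ hp.one_lt)
  have hord : orderOf (elemP p x) = p := by
    have := orderOf_dvd_of_pow_eq_one hpow
    rcases (Nat.dvd_prime hp).mp this with h | h
    · exact absurd (orderOf_eq_one_iff.mp h) hne
    · exact h
  exact ⟨hord, Subgroup.mem_zpowers_iff.mpr ⟨((orderOf x / p : ℕ) : ℤ), by
    rw [zpow_natCast]; rfl⟩, by rw [hdiv]; exact pow_pos hp.pos _⟩

/-- key: any order-p element in ⟨x⟩ generates the same subgroup as elemP x -/
theorem zpowers_eq_of_orderOf_eq (hp : p.Prime) (hG : IsPGroup p G)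
    (x z : G) (hx : x ≠ 1) (hz : orderOf z = p) (hmem : z ∈ Subgroup.zpowers x) :
    Subgroup.zpowers z = Subgroup.zpowers (elemP p x) := by
  obtain ⟨k, hk⟩ := exists_pow_order hp hG x hx
  have hdiv : orderOf x / p = p ^ k := by
    rw [hk, pow_succ, Nat.mul_div_cancel _ hp.pos]
  obtain ⟨n, hn'⟩ := mem_powers_iff_mem_zpowers.mpr hmem
  have hn : x ^ n = z := hn'
  have hzp : z ^ p = 1 := by rw [← hz, pow_orderOf_eq_one]
  have hxnp : x ^ (n * p) = 1 := by rw [pow_mul, hn, hzp]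
  have hdvd : p ^ (k + 1) ∣ n * p := hk ▸ orderOf_dvd_of_pow_eq_one hxnp
  have hdvd' : p ^ k ∣ n :=
    Nat.dvd_of_mul_dvd_mul_right hp.pos (by rwa [← pow_succ])
  obtain ⟨m, hm⟩ := hdvd'
  have hzmem : z ∈ Subgroup.zpowers (elemP p x) := by
    refine Subgroup.mem_zpowers_iff.mpr ⟨(m : ℤ), ?_⟩
    rw [zpow_natCast, elemP, hdiv, ← pow_mul, ← hm, hn]
  have hle : Subgroup.zpowers z ≤ Subgroup.zpowers (elemP p x) :=
    Subgroup.zpowers_le.mpr hzmem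
  have hcard : Nat.card (Subgroup.zpowers (elemP p x)) ≤ Nat.card (Subgroup.zpowers z) := by
    rw [Nat.card_zpowers, Nat.card_zpowers, hz, (elemP_spec hp hG x hx).1]
  exact Subgroup.eq_of_le_of_card_ge hle hcard

theorem minimal_zpowers (hp : p.Prime) (hG : IsPGroup p G) (z : G) (hz : orderOf z = p) :
    Minimal (fun K : Subgroup G => K ≠ ⊥) (Subgroup.zpowers z) := by
  have hz1 : z ≠ 1 := by
    intro h; rw [h, orderOf_one] at hz; exact hp.one_lt.ne hz
  constructor
  · intro h
    exact hz1 (Subgroup.mem_bot.mp (h ▸ Subgroup.mem_zpowers z))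
  · intro K hK hle
    obtain ⟨⟨w, hwK⟩, hw1⟩ := Subgroup.ne_bot_iff_exists_ne_one.mp hK
    have hw1' : w ≠ 1 := by simpa [Subtype.ext_iff] using hw1
    have hwz : w ∈ Subgroup.zpowers z := hle hwK
    have hwo : orderOf w = p := by
      have hdvd : orderOf w ∣ p := by
        rw [← hz, ← Nat.card_zpowers z]
        exact Subgroup.orderOf_dvd_natCard _ hwz
      rcases (Nat.dvd_prime hp).mp hdvd with h | h
      · exact absurd (orderOf_eq_one_iff.mp h) hw1'
      · exact h
    have h1 : Subgroup.zpowers w = Subgroup.zpowers (elemP p z) :=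
      zpowers_eq_of_orderOf_eq hp hG z w hz1 hwo hwz
    have helem : elemP p z = z := by
      rw [elemP, hz, Nat.div_self hp.pos, pow_one]
    rw [helem] at h1
    rw [← h1]
    exact Subgroup.zpowers_le.mpr hwK

end Aux

theorem powerGraphStar_connected_iff_unique_minimal (p : ℕ) (hp : p.Prime)
    (G : Type*) [Group G] [Fintype G] (hG : IsPGroup p G) :
    (powerGraphStar G).Connected ↔
      ∃! H : Subgroup G, Minimal (fun K : Subgroup G => K ≠ ⊥) H := by
  have adjP : ∀ (a b : {g : G // g ≠ 1}), a.1 ≠ b.1 →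
      ((∃ m : ℕ, 0 < m ∧ b.1 = a.1 ^ m) ∨ (∃ m : ℕ, 0 < m ∧ a.1 = b.1 ^ m)) →
      (powerGraphStar G).Adj a b := fun a b h1 h2 =>
      (show a.1 ≠ b.1 ∧ ((∃ m : ℕ, 0 < m ∧ b.1 = a.1 ^ m) ∨ (∃ m : ℕ, 0 < m ∧ a.1 = b.1 ^ m)) from ⟨h1, h2⟩)
  -- reachability helper
  have reach : ∀ (a b : {g : G // g ≠ 1}), (∃ m : ℕ, 0 < m ∧ b.1 = a.1 ^ m) →
      (powerGraphStar G).Reachable a b := by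
    intro a b h
    by_cases hab : a = b
    · exact hab ▸ SimpleGraph.Reachable.refl a
    · exact (adjP a b (fun h' => hab (Subtype.ext h')) (Or.inl h)).reachable
  constructor
  · intro hcon
    obtain ⟨hconn, hne⟩ := ((powerGraphStar G).connected_iff).mp hcon
    obtain ⟨⟨x, hx⟩⟩ := hne
    -- the invariant
    have inv : ∀ a b : {g : G // g ≠ 1}, (powerGraphStar G).Adj a b →
        Subgroup.zpowers (elemP p a.1) = Subgroup.zpowers (elemP p b.1) := by
      have key : ∀ a b : {g : G // g ≠ 1}, (∃ m : ℕ, 0 < m ∧ b.1 = a.1 ^ m) →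
          Subgroup.zpowers (elemP p a.1) = Subgroup.zpowers (elemP p b.1) := by
        rintro a b ⟨m, _, hm⟩
        obtain ⟨hordb, hmemb, -⟩ := elemP_spec hp hG b.1 b.2
        have hmema : elemP p b.1 ∈ Subgroup.zpowers a.1 := by
          have : Subgroup.zpowers b.1 ≤ Subgroup.zpowers a.1 :=
            Subgroup.zpowers_le.mpr (hm ▸ Subgroup.mem_zpowers_iff.mpr
              ⟨(m : ℤ), by rw [zpow_natCast]⟩)
          exact this hmemb
        exact ((zpowers_eq_of_orderOf_eq hp hG a.1 (elemP p b.1) a.2 hordb hmema).symm).trans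
          (zpowers_eq_of_orderOf_eq hp hG b.1 (elemP p b.1) b.2 hordb hmemb).symm
      intro a b hab
      obtain ⟨-, h | h⟩ : a.1 ≠ b.1 ∧ ((∃ m : ℕ, 0 < m ∧ b.1 = a.1 ^ m) ∨ (∃ m : ℕ, 0 < m ∧ a.1 = b.1 ^ m)) := hab
      · exact key a b h
      · exact (key b a h).symm
    have invW : ∀ {a b : {g : G // g ≠ 1}}, (powerGraphStar G).Walk a b →
        Subgroup.zpowers (elemP p a.1) = Subgroup.zpowers (elemP p b.1) := by
      intro a b w
      induction w with
      | nil => rfl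
      | cons h _ ih => exact (inv _ _ h).trans ih
    have invR : ∀ a b : {g : G // g ≠ 1}, (powerGraphStar G).Reachable a b →
        Subgroup.zpowers (elemP p a.1) = Subgroup.zpowers (elemP p b.1) := by
      intro a b h
      exact h.elim fun w => invW w
    obtain ⟨hordx, -, -⟩ := elemP_spec hp hG x hx
    refine ⟨Subgroup.zpowers (elemP p x), minimal_zpowers hp hG _ hordx, ?_⟩
    intro H hH
    obtain ⟨⟨h, hhH⟩, hh1⟩ := Subgroup.ne_bot_iff_exists_ne_one.mp hH.1
    have hh1' : h ≠ 1 := by simpa [Subtype.ext_iff] using hh1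
    obtain ⟨hordh, hmemh, -⟩ := elemP_spec hp hG h hh1'
    have hzle : Subgroup.zpowers (elemP p h) ≤ H :=
      le_trans (Subgroup.zpowers_le.mpr hmemh) (Subgroup.zpowers_le.mpr hhH)
    have hHeq : H = Subgroup.zpowers (elemP p h) :=
      le_antisymm (hH.2 (minimal_zpowers hp hG _ hordh).1 hzle) hzle
    have he1 : elemP p h ≠ 1 := fun h' => by
      rw [h', orderOf_one] at hordh; exact hp.one_lt.ne hordh
    have := invR ⟨h, hh1'⟩ ⟨x, hx⟩ (hconn _ _)
    have helem : elemP p (elemP p h) = elemP p h := by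
      rw [elemP, hordh, Nat.div_self hp.pos, pow_one]
    -- need zpowers (elemP p h) = zpowers (elemP p x); use invR from vertex elemP p h
    have := invR ⟨elemP p h, he1⟩ ⟨x, hx⟩ (hconn _ _)
    simp only [helem] at this
    rw [hHeq, this]
  · rintro ⟨H, hH, huniq⟩
    obtain ⟨⟨h, hhH⟩, hh1⟩ := Subgroup.ne_bot_iff_exists_ne_one.mp hH.1
    have hh1' : h ≠ 1 := by simpa [Subtype.ext_iff] using hh1
    refine ((powerGraphStar G).connected_iff).mpr ⟨?_, ⟨⟨h, hh1'⟩⟩⟩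
    intro a b
    obtain ⟨horda, hmema, hpos_a⟩ := elemP_spec hp hG a.1 a.2
    obtain ⟨hordb, hmemb, hpos_b⟩ := elemP_spec hp hG b.1 b.2
    have hea1 : elemP p a.1 ≠ 1 := fun h' => by
      rw [h', orderOf_one] at horda; exact hp.one_lt.ne horda
    have heb1 : elemP p b.1 ≠ 1 := fun h' => by
      rw [h', orderOf_one] at hordb; exact hp.one_lt.ne hordb
    have hA : Subgroup.zpowers (elemP p a.1) = H :=
      huniq _ (minimal_zpowers hp hG _ horda)
    have hB : Subgroup.zpowers (elemP p b.1) = H :=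
      huniq _ (minimal_zpowers hp hG _ hordb)
    have hmem : elemP p b.1 ∈ Subgroup.zpowers (elemP p a.1) := by
      rw [hA, ← hB]; exact Subgroup.mem_zpowers _
    obtain ⟨n, hn'⟩ := mem_powers_iff_mem_zpowers.mpr hmem
    have hn : elemP p a.1 ^ n = elemP p b.1 := hn'
    have hnpos : 0 < n := by
      rcases Nat.eq_zero_or_pos n with h0 | h0
      · rw [h0, pow_zero] at hn; exact absurd hn.symm heb1
      · exact h0
    have r1 : (powerGraphStar G).Reachable a ⟨elemP p a.1, hea1⟩ :=
      reach _ _ ⟨orderOf a.1 / p, hpos_a, rfl⟩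
    have r2 : (powerGraphStar G).Reachable ⟨elemP p a.1, hea1⟩ ⟨elemP p b.1, heb1⟩ :=
      reach _ _ ⟨n, hnpos, hn.symm⟩
    have r3 : (powerGraphStar G).Reachable b ⟨elemP p b.1, heb1⟩ :=
      reach _ _ ⟨orderOf b.1 / p, hpos_b, rfl⟩
    exact (r1.trans r2).trans r3.symm
end

section
/- If G is a finite group whose center has order divisible by at least two distinct primes, then the graph P*(G) obtained from the power graph of G by deleting the identity is connected. -/
section aux
variable {G : Type*} [Group G] [Fintype G]

lemma pgs_adj {x y : G} (hx : x ≠ 1) (hy : y ≠ 1) (hne : x ≠ y)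
    (h : (∃ m : ℕ, 0 < m ∧ y = x ^ m) ∨ (∃ m : ℕ, 0 < m ∧ x = y ^ m)) :
    (powerGraphStar G).Adj ⟨x, hx⟩ ⟨y, hy⟩ :=
  ⟨hne, h⟩

lemma pgs_reach_pow {x y : G} (hx : x ≠ 1) (hy : y ≠ 1) {m : ℕ} (hm : y = x ^ m) :
    (powerGraphStar G).Reachable ⟨x, hx⟩ ⟨y, hy⟩ := by
  rcases eq_or_ne x y with rfl | hne
  · rfl
  · have hm0 : 0 < m := by
      rcases Nat.eq_zero_or_pos m with rfl | h
      · simp at hm; exact absurd hm hy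
      · exact h
    exact (pgs_adj hx hy hne (Or.inl ⟨m, hm0, hm⟩)).reachable

lemma pgs_reach_of_coprime {x c : G} (hx : x ≠ 1) (hc : c ≠ 1)
    (hcomm : Commute x c) (hcop : Nat.Coprime (orderOf x) (orderOf c)) :
    (powerGraphStar G).Reachable ⟨x, hx⟩ ⟨c, hc⟩ := by
  have hox : 1 < orderOf x := by
    have h1 := orderOf_pos x
    have h2 : orderOf x ≠ 1 := fun h => hx (orderOf_eq_one_iff.mp h)
    omega
  have hoc : 1 < orderOf c := by
    have h1 := orderOf_pos c
    have h2 : orderOf c ≠ 1 := fun h => hc (orderOf_eq_one_iff.mp h)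
    omega
  have hxc : x * c ≠ 1 := by
    intro h
    have : c = x⁻¹ := by
      rw [eq_inv_iff_mul_eq_one, hcomm.eq] at *; exact h
    subst this
    rw [orderOf_inv] at hcop
    unfold Nat.Coprime at hcop
    rw [Nat.gcd_self] at hcop
    omega
  obtain ⟨k, hk1, hk2⟩ := Nat.chineseRemainder hcop 1 0
  obtain ⟨l, hl1, hl2⟩ := Nat.chineseRemainder hcop 0 1
  have hk1' : k % orderOf x = 1 := by
    have := hk1; rw [Nat.ModEq, Nat.mod_eq_of_lt hox] at this; exact this
  have hk2' : k % orderOf c = 0 := by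
    have := hk2; rw [Nat.ModEq, Nat.zero_mod] at this; exact this
  have hl1' : l % orderOf x = 0 := by
    have := hl1; rw [Nat.ModEq, Nat.zero_mod] at this; exact this
  have hl2' : l % orderOf c = 1 := by
    have := hl2; rw [Nat.ModEq, Nat.mod_eq_of_lt hoc] at this; exact this
  have hxck : (x * c) ^ k = x := by
    rw [hcomm.mul_pow, ← pow_mod_orderOf x, hk1', pow_one, ← pow_mod_orderOf c, hk2', pow_zero,
      mul_one]
  have hxcl : (x * c) ^ l = c := by
    rw [hcomm.mul_pow, ← pow_mod_orderOf x, hl1', pow_zero, ← pow_mod_orderOf c, hl2', pow_one,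
      one_mul]
  have r1 : (powerGraphStar G).Reachable ⟨x, hx⟩ ⟨x * c, hxc⟩ :=
    (pgs_reach_pow hxc hx hxck.symm).symm
  have r2 : (powerGraphStar G).Reachable ⟨x * c, hxc⟩ ⟨c, hc⟩ :=
    pgs_reach_pow hxc hc hxcl.symm
  exact r1.trans r2

end aux

theorem powerGraphStar_connected_of_center (G : Type*) [Group G] [Fintype G]
    (h : ∃ p q : ℕ, p.Prime ∧ q.Prime ∧ p ≠ q ∧
      p ∣ Nat.card (Subgroup.center G) ∧ q ∣ Nat.card (Subgroup.center G)) :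
    (powerGraphStar G).Connected := by
  obtain ⟨p, q, hp, hq, hpq, hpd, hqd⟩ := h
  haveI : Fact p.Prime := ⟨hp⟩
  haveI : Fact q.Prime := ⟨hq⟩
  obtain ⟨a', ha'⟩ := exists_prime_orderOf_dvd_card' (G := Subgroup.center G) p hpd
  obtain ⟨b', hb'⟩ := exists_prime_orderOf_dvd_card' (G := Subgroup.center G) q hqd
  set a : G := (a' : G) with ha_def
  set b : G := (b' : G) with hb_def
  have hoa : orderOf a = p := by rw [ha_def, Subgroup.orderOf_coe, ha']
  have hob : orderOf b = q := by rw [hb_def, Subgroup.orderOf_coe, hb']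
  have ha1 : a ≠ 1 := by
    intro h; rw [h, orderOf_one] at hoa; exact hp.one_lt.ne' hoa.symm
  have hb1 : b ≠ 1 := by
    intro h; rw [h, orderOf_one] at hob; exact hq.one_lt.ne' hob.symm
  have hacen : ∀ g : G, Commute g a :=
    fun g => Subgroup.mem_center_iff.mp a'.2 g
  have hbcen : ∀ g : G, Commute g b :=
    fun g => Subgroup.mem_center_iff.mp b'.2 g
  have hba : (powerGraphStar G).Reachable ⟨b, hb1⟩ ⟨a, ha1⟩ := by
    apply pgs_reach_of_coprime hb1 ha1 (hacen b)
    · rw [hob, hoa]; exact (Nat.coprime_primes hq hp).mpr (Ne.symm hpq)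
  have key : ∀ x : {g : G // g ≠ 1}, (powerGraphStar G).Reachable x ⟨a, ha1⟩ := by
    rintro ⟨x, hx⟩
    have hn : 1 < orderOf x := by
      have h1 := orderOf_pos x
      have h2 : orderOf x ≠ 1 := fun h => hx (orderOf_eq_one_iff.mp h)
      omega
    set n := orderOf x with hn_def
    set r := n.minFac with hr_def
    have hrp : r.Prime := Nat.minFac_prime (by omega)
    set y := x ^ (n / r) with hy_def
    have hrd : r ∣ n := Nat.minFac_dvd n
    have hoy : orderOf y = r := by
      rw [hy_def, orderOf_pow, ← hn_def, Nat.gcd_eq_right (Nat.div_dvd_of_dvd hrd),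
        Nat.div_div_self hrd (by omega)]
    have hy1 : y ≠ 1 := by
      intro h; rw [h, orderOf_one] at hoy; exact hrp.one_lt.ne' hoy.symm
    have rxy : (powerGraphStar G).Reachable ⟨x, hx⟩ ⟨y, hy1⟩ :=
      pgs_reach_pow hx hy1 hy_def
    rcases eq_or_ne r p with hrp' | hrp'
    · have rb : (powerGraphStar G).Reachable ⟨y, hy1⟩ ⟨b, hb1⟩ := by
        apply pgs_reach_of_coprime hy1 hb1 (hbcen y)
        rw [hoy, hob, hrp']
        exact (Nat.coprime_primes hp hq).mpr hpq
      exact rxy.trans (rb.trans hba)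
    · have ra : (powerGraphStar G).Reachable ⟨y, hy1⟩ ⟨a, ha1⟩ := by
        apply pgs_reach_of_coprime hy1 ha1 (hacen y)
        rw [hoy, hoa]
        exact (Nat.coprime_primes hrp hp).mpr hrp'
      exact rxy.trans ra
  haveI : Nonempty {g : G // g ≠ 1} := ⟨⟨a, ha1⟩⟩
  exact ⟨fun u v => (key u).trans (key v).symm⟩
end

section
/- For a finite group G, if the graph P*(G) is connected, then the prime graph (Gruenberg–Kegel graph) Γ(G) is connected. -/
def primeGraph (G : Type*) [Group G] : SimpleGraph {p : ℕ // p.Prime ∧ p ∣ Nat.card G} where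
  Adj p q := p ≠ q ∧ ∃ g : G, orderOf g = p.1 * q.1
  symm := by
    refine ⟨?_⟩
    rintro p q ⟨h, g, hg⟩
    exact ⟨h.symm, g, by rw [mul_comm]; exact hg⟩
  loopless := ⟨fun p h => h.1 rfl⟩

lemma clique_aux {G : Type*} [Group G] [Fintype G] (g : G)
    {p q : ℕ} (hp : p.Prime) (hq : q.Prime) (hpg : p ∣ orderOf g) (hqg : q ∣ orderOf g)
    (hpc : p ∣ Nat.card G) (hqc : q ∣ Nat.card G) :
    (primeGraph G).Reachable ⟨p, hp, hpc⟩ ⟨q, hq, hqc⟩ := by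
  rcases eq_or_ne p q with rfl | hpq
  · rfl
  · apply SimpleGraph.Adj.reachable
    refine ⟨by simpa [Subtype.ext_iff] using hpq, ?_⟩
    have hpqd : p * q ∣ orderOf g :=
      Nat.Coprime.mul_dvd_of_dvd_of_dvd ((Nat.coprime_primes hp hq).mpr hpq) hpg hqg
    have h0 : orderOf g ≠ 0 := (orderOf_pos g).ne'
    refine ⟨g ^ (orderOf g / (p * q)), ?_⟩
    rw [orderOf_pow, Nat.gcd_eq_right (Nat.div_dvd_of_dvd hpqd),
      Nat.div_div_self hpqd h0]

lemma dvd_card_of_dvd_orderOf {G : Type*} [Group G] [Fintype G] {g : G} {p : ℕ}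
    (hp : p ∣ orderOf g) : p ∣ Nat.card G :=
  hp.trans (orderOf_dvd_natCard g)

lemma walk_reach {G : Type*} [Group G] [Fintype G] {u v : {g : G // g ≠ 1}}
    (w : (powerGraphStar G).Walk u v) :
    ∀ (p q : ℕ) (hp : p.Prime) (hq : q.Prime) (hpu : p ∣ orderOf u.1)
      (hqv : q ∣ orderOf v.1),
      (primeGraph G).Reachable ⟨p, hp, dvd_card_of_dvd_orderOf hpu⟩
        ⟨q, hq, dvd_card_of_dvd_orderOf hqv⟩ := by
  induction w with
  | nil =>
    intro p q hp hq hpu hqv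
    exact clique_aux _ hp hq hpu hqv (dvd_card_of_dvd_orderOf hpu) (dvd_card_of_dvd_orderOf hqv)
  | @cons u t v hadj w ih =>
    intro p q hp hq hpu hqv
    have ht1 : orderOf t.1 ≠ 1 := by
      simpa [orderOf_eq_one_iff] using t.2
    set r := (orderOf t.1).minFac with hr
    have hrp : r.Prime := Nat.minFac_prime ht1
    have hrt : r ∣ orderOf t.1 := Nat.minFac_dvd _
    have hdvd : orderOf t.1 ∣ orderOf u.1 ∨ orderOf u.1 ∣ orderOf t.1 := by
      rcases hadj.2 with ⟨m, _, hm⟩ | ⟨m, _, hm⟩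
      · left; rw [show (t.1 : G) = u.1 ^ m from hm]; exact orderOf_pow_dvd m
      · right; rw [show (u.1 : G) = t.1 ^ m from hm]; exact orderOf_pow_dvd m
    have step : (primeGraph G).Reachable ⟨p, hp, dvd_card_of_dvd_orderOf hpu⟩
        ⟨r, hrp, dvd_card_of_dvd_orderOf hrt⟩ := by
      rcases hdvd with hd | hd
      · exact clique_aux u.1 hp hrp hpu (hrt.trans hd)
          (dvd_card_of_dvd_orderOf hpu) (dvd_card_of_dvd_orderOf hrt)
      · exact clique_aux t.1 hp hrp (hpu.trans hd) hrt
          (dvd_card_of_dvd_orderOf hpu) (dvd_card_of_dvd_orderOf hrt)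
    exact step.trans (ih r q hrp hq hrt hqv)

theorem primeGraph_connected_of_powerGraphStar_connected (G : Type*) [Group G] [Fintype G]
    (h : (powerGraphStar G).Connected) : (primeGraph G).Connected := by
  rw [SimpleGraph.connected_iff]
  constructor
  · rintro ⟨p, hp, hpc⟩ ⟨q, hq, hqc⟩
    haveI := Fact.mk hp
    haveI := Fact.mk hq
    obtain ⟨a, ha⟩ := exists_prime_orderOf_dvd_card p (by rwa [Nat.card_eq_fintype_card] at hpc)
    obtain ⟨b, hb⟩ := exists_prime_orderOf_dvd_card q (by rwa [Nat.card_eq_fintype_card] at hqc)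
    have ha1 : a ≠ 1 := by
      intro h1; rw [h1, orderOf_one] at ha; exact hp.one_lt.ne' ha.symm
    have hb1 : b ≠ 1 := by
      intro h1; rw [h1, orderOf_one] at hb; exact hq.one_lt.ne' hb.symm
    obtain ⟨w⟩ := h.preconnected ⟨a, ha1⟩ ⟨b, hb1⟩
    have := walk_reach w p q hp hq (ha ▸ dvd_rfl) (hb ▸ dvd_rfl)
    exact this
  · rcases h.nonempty with ⟨g, hg⟩
    have ho : orderOf g ≠ 1 := by simpa [orderOf_eq_one_iff] using hg
    exact ⟨⟨(orderOf g).minFac, Nat.minFac_prime ho,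
      dvd_card_of_dvd_orderOf (Nat.minFac_dvd _)⟩⟩
end

section
/- Let G be a nontrivial finite group. Then P*(G) is a bipartite graph if and only if every element of G has order 1, 2, or 3. -/
lemma fin2_aux : ∀ x y z : Fin 2, x ≠ y → x ≠ z → y ≠ z → False := by decide

theorem powerGraphStar_bipartite_iff (G : Type*) [Group G] [Fintype G] [Nontrivial G] :
    (powerGraphStar G).Colorable 2 ↔
      ∀ g : G, orderOf g = 1 ∨ orderOf g = 2 ∨ orderOf g = 3 := by
  constructor
  · intro hcol g
    by_contra hg
    push_neg at hg
    obtain ⟨h1, h2, h3⟩ := hg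
    have hpos := orderOf_pos g
    set n := orderOf g with hn
    have hn4 : 4 ≤ n := by omega
    have hg1 : g ≠ 1 := by
      intro hh; apply h1; rw [hn, hh, orderOf_one]
    have hord : g ^ n = 1 := pow_orderOf_eq_one g
    have hpow2 : g ^ 2 ≠ 1 := by
      intro hh
      have := Nat.le_of_dvd (by norm_num) (orderOf_dvd_of_pow_eq_one hh)
      omega
    have hpow3 : g ^ 3 ≠ 1 := by
      intro hh
      have := Nat.le_of_dvd (by norm_num) (orderOf_dvd_of_pow_eq_one hh)
      omega
    have hginv : g⁻¹ ≠ 1 := inv_ne_one.mpr hg1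
    set a : {x : G // x ≠ 1} := ⟨g, hg1⟩
    set b : {x : G // x ≠ 1} := ⟨g⁻¹, hginv⟩
    set c : {x : G // x ≠ 1} := ⟨g ^ 2, hpow2⟩
    have hmul : g ^ (n - 1) * g = 1 := by
      rw [← pow_succ]
      have : n - 1 + 1 = n := by omega
      rw [this, hord]
    have hinv_pow : g⁻¹ = g ^ (n - 1) := by
      symm; rw [eq_inv_iff_mul_eq_one]; exact hmul
    have hsq_pow : g ^ 2 = g⁻¹ ^ (n - 2) := by
      rw [inv_pow]
      symm
      rw [inv_eq_iff_mul_eq_one, ← pow_add]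
      have : n - 2 + 2 = n := by omega
      rw [this, hord]
    have hab : (powerGraphStar G).Adj a b := by
      refine ⟨?_, Or.inl ⟨n - 1, by omega, hinv_pow⟩⟩
      intro hh
      have h' : g = g⁻¹ := hh
      exact hpow2 (by rw [pow_two]; nth_rewrite 2 [h']; simp)
    have hac : (powerGraphStar G).Adj a c := by
      refine ⟨?_, Or.inl ⟨2, by norm_num, rfl⟩⟩
      intro hh
      have h' : g = g ^ 2 := hh
      have : g ^ 2 = g ^ 1 := by rw [pow_one]; exact h'.symm
      have := pow_injOn_Iio_orderOf (by simp; omega) (by simp; omega) this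
      omega
    have hbc : (powerGraphStar G).Adj b c := by
      refine ⟨?_, Or.inl ⟨n - 2, by omega, hsq_pow⟩⟩
      intro hh
      have h' : g⁻¹ = g ^ 2 := hh
      exact hpow3 (by rw [pow_succ' g 2, ← h']; simp)
    obtain ⟨C⟩ := hcol
    exact fin2_aux (C a) (C c) (C b) (C.valid hac) (C.valid hab) (C.valid hbc.symm)
  · intro h
    classical
    set f : G → ℕ := fun g => (Fintype.equivFin G g : ℕ) with hf
    have hfinj : Function.Injective f := fun x y hxy => by
      apply (Fintype.equivFin G).injective
      exact Fin.ext hxy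
    have main : ∀ x y : G, x ≠ 1 → y ≠ 1 → x ≠ y → ∀ m : ℕ, y = x ^ m →
        orderOf x = 3 ∧ y = x ^ 2 ∧ x = y ^ 2 := by
      intro x y hx hy hxy m hm
      have hordx := h x
      have hx1 : orderOf x ≠ 1 := fun h' => hx (orderOf_eq_one_iff.mp h')
      have hmod : x ^ (m % orderOf x) = x ^ m := pow_mod_orderOf x m
      rcases hordx with h' | h' | h'
      · exact absurd h' hx1
      · exfalso
        rw [h'] at hmod
        have : m % 2 = 0 ∨ m % 2 = 1 := by omega
        rcases this with hmm | hmm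
        · rw [hmm, pow_zero] at hmod; rw [hm] at hy; exact hy hmod.symm
        · rw [hmm, pow_one] at hmod; rw [hm] at hxy; exact hxy hmod
      · rw [h'] at hmod
        have hx3 : x ^ 3 = 1 := h' ▸ pow_orderOf_eq_one x
        have : m % 3 = 0 ∨ m % 3 = 1 ∨ m % 3 = 2 := by omega
        rcases this with hmm | hmm | hmm
        · rw [hmm, pow_zero] at hmod; rw [hm] at hy; exact absurd hmod.symm hy
        · rw [hmm, pow_one] at hmod; rw [hm] at hxy; exact absurd hmod hxy
        · rw [hmm] at hmod
          refine ⟨h', by rw [hm, ← hmod], ?_⟩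
          rw [hm, ← hmod, ← pow_mul]
          have : (2 : ℕ) * 2 = 3 + 1 := by norm_num
          rw [this, pow_succ, hx3, one_mul]
    have key : ∀ x y : {g : G // g ≠ 1}, (powerGraphStar G).Adj x y →
        (orderOf x.1 = 3 ∧ y.1 = x.1 ^ 2 ∧ x.1 = y.1 ^ 2) := by
      rintro ⟨x, hx⟩ ⟨y, hy⟩ ⟨hne, hpow⟩
      have hx' : x ≠ 1 := hx
      have hy' : y ≠ 1 := hy
      have hne' : x ≠ y := fun hh => hne (by subst hh; rfl)
      rcases hpow with ⟨m, _, hm⟩ | ⟨m, _, hm⟩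
      · exact main x y hx' hy' hne' m hm
      · obtain ⟨h1, h2, h3⟩ := main y x hy' hx' (Ne.symm hne') m hm
        refine ⟨?_, h3, h2⟩
        have hy3 : y ^ 3 = 1 := h1 ▸ pow_orderOf_eq_one y
        have hx2 : x ^ 2 = y := by
          rw [h2, ← pow_mul]
          have : (2 : ℕ) * 2 = 3 + 1 := by norm_num
          rw [this, pow_succ, hy3, one_mul]
        rcases h x with h' | h' | h'
        · exact absurd h' (fun hh => hx' (orderOf_eq_one_iff.mp hh))
        · exfalso
          have : x ^ 2 = 1 := h' ▸ pow_orderOf_eq_one x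
          exact hy' (hx2 ▸ this)
        · exact h'
    refine ⟨SimpleGraph.Coloring.mk
      (fun v => if f v.1 < f (v.1 ^ 2) then 0 else 1) ?_⟩
    intro x y hadj
    obtain ⟨_, hyx, hxy⟩ := key x y hadj
    have hne : x.1 ≠ y.1 := fun hh => hadj.ne (Subtype.ext hh)
    have hfne : f x.1 ≠ f y.1 := fun hh => hne (hfinj hh)
    show (if f x.1 < f (x.1 ^ 2) then (0 : Fin 2) else 1) ≠
      (if f y.1 < f (y.1 ^ 2) then 0 else 1)
    rw [← hyx, ← hxy]
    rcases lt_or_gt_of_ne hfne with h' | h'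
    · simp [h', not_lt_of_gt h']
    · simp [h', not_lt_of_gt h']
end

section
/- Let G be a nontrivial finite group. Then P*(G) is a tree if and only if G is cyclic of order 2 or cyclic of order 3. -/
lemma pgs_adj_s13 {G : Type*} [Group G] {u v : {g : G // g ≠ 1}} :
    (powerGraphStar G).Adj u v ↔
      (u : G) ≠ v ∧ ((∃ m : ℕ, 0 < m ∧ (v : G) = (u : G) ^ m) ∨
        (∃ m : ℕ, 0 < m ∧ (u : G) = (v : G) ^ m)) := Iff.rfl

lemma acyclic_of_card_le_two {V : Type*} [Fintype V] (h : Fintype.card V ≤ 2)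
    (G : SimpleGraph V) : G.IsAcyclic := by
  intro v c hc
  have h3 := hc.three_le_length
  have hnd : c.support.tail.Nodup := hc.support_nodup
  have hle := hnd.length_le_card
  have : c.support.length = c.length + 1 := c.length_support
  have : c.support.tail.length = c.length := by
    rw [List.length_tail, this]
    omega
  omega

lemma not_acyclic_of_triangle {V : Type*} {G : SimpleGraph V} {a b c : V}
    (hab : G.Adj a b) (hbc : G.Adj b c) (hca : G.Adj c a) : ¬ G.IsAcyclic := by
  intro h
  have hab' := hab.ne
  have hbc' := hbc.ne
  have hca' := hca.ne
  refine h (SimpleGraph.Walk.cons hab (SimpleGraph.Walk.cons hbc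
    (SimpleGraph.Walk.cons hca SimpleGraph.Walk.nil))) ?_
  rw [SimpleGraph.Walk.isCycle_def, SimpleGraph.Walk.isTrail_def]
  refine ⟨?_, by simp, ?_⟩
  · simp only [SimpleGraph.Walk.edges_cons, SimpleGraph.Walk.edges_nil,
      List.nodup_cons, List.mem_cons, List.not_mem_nil, or_false, List.mem_singleton,
      List.nodup_nil, and_true, Sym2.eq_iff]
    aesop
  · simp only [SimpleGraph.Walk.support_cons, SimpleGraph.Walk.support_nil, List.tail_cons]
    simp [hbc', hca', hab.ne']

lemma walk_preserve {V : Type*} {G : SimpleGraph V} (P : V → Prop)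
    (hP : ∀ u v, P u → G.Adj u v → P v) {u v : V} (w : G.Walk u v) (hu : P u) : P v := by
  induction w with
  | nil => exact hu
  | cons h w ih => exact ih (hP _ _ hu h)

theorem powerGraphStar_isTree_iff (G : Type*) [Group G] [Fintype G] [Nontrivial G] :
    (powerGraphStar G).IsTree ↔
      IsCyclic G ∧ (Fintype.card G = 2 ∨ Fintype.card G = 3) := by
  classical
  constructor
  · intro h
    -- Step 1: all orders are at most 3
    have hord : ∀ g : G, g ≠ 1 → orderOf g ≤ 3 := by
      intro g hg
      by_contra hlt
      push_neg at hlt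
      set n := orderOf g with hn
      have hpos : 0 < n := orderOf_pos g
      have hg2 : g ^ 2 ≠ 1 := by
        intro e
        have := Nat.le_of_dvd (by norm_num) (orderOf_dvd_of_pow_eq_one e)
        omega
      have hg3 : g ^ 3 ≠ 1 := by
        intro e
        have := Nat.le_of_dvd (by norm_num) (orderOf_dvd_of_pow_eq_one e)
        omega
      have hginv : g⁻¹ ≠ 1 := inv_ne_one.mpr hg
      have hne1 : g ≠ g ^ 2 := by
        intro e
        apply hg
        have : g * 1 = g * g := by rw [mul_one]; rw [pow_two] at e; exact e
        exact (mul_left_cancel this).symm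
      have hne2 : g ≠ g⁻¹ := by
        intro e
        apply hg2
        rw [pow_two]; nth_rewrite 2 [e]; simp
      have hne3 : g ^ 2 ≠ g⁻¹ := by
        intro e
        apply hg3
        have : g ^ 2 * g = g⁻¹ * g := by rw [e]
        simpa [pow_succ] using this
      have hA : (powerGraphStar G).Adj ⟨g, hg⟩ ⟨g ^ 2, hg2⟩ :=
        pgs_adj_s13.mpr ⟨hne1, Or.inl ⟨2, by norm_num, rfl⟩⟩
      have hginv_pow : g⁻¹ = g ^ (n - 1) := by
        symm
        apply eq_inv_of_mul_eq_one_left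
        rw [← pow_succ]
        have : n - 1 + 1 = n := by omega
        rw [this]; exact pow_orderOf_eq_one g
      have hB : (powerGraphStar G).Adj ⟨g ^ 2, hg2⟩ ⟨g⁻¹, hginv⟩ := by
        refine pgs_adj_s13.mpr ⟨hne3, Or.inr ⟨n - 2, by omega, ?_⟩⟩
        show g ^ 2 = (g⁻¹) ^ (n - 2)
        rw [inv_pow]
        symm
        apply inv_eq_of_mul_eq_one_left
        rw [← pow_add]
        have : 2 + (n - 2) = n := by omega
        rw [this]; exact pow_orderOf_eq_one g
      have hC : (powerGraphStar G).Adj ⟨g⁻¹, hginv⟩ ⟨g, hg⟩ := by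
        refine pgs_adj_s13.mpr ⟨fun e => hne2 e.symm, Or.inr ⟨n - 1, by omega, hginv_pow⟩⟩
      exact not_acyclic_of_triangle hA hB hC h.IsAcyclic
    have hord23 : ∀ g : G, g ≠ 1 → orderOf g = 2 ∨ orderOf g = 3 := by
      intro g hg
      have h1 : orderOf g ≠ 1 := by simpa [orderOf_eq_one_iff] using hg
      have h2 := hord g hg
      have h3 : 0 < orderOf g := orderOf_pos g
      omega
    by_cases hx2 : ∃ x : G, orderOf x = 2
    · -- order-2 element exists: it is isolated, so |G| = 2
      obtain ⟨x, hx⟩ := hx2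
      have hx1 : x ≠ 1 := by
        intro e; rw [e, orderOf_one] at hx; omega
      have hx21 : x ^ 2 = 1 := by rw [← hx]; exact pow_orderOf_eq_one x
      -- x has no neighbors
      have hiso : ∀ v : {g : G // g ≠ 1}, ¬ (powerGraphStar G).Adj ⟨x, hx1⟩ v := by
        rintro ⟨y, hy⟩ hadj
        rw [pgs_adj_s13] at hadj
        obtain ⟨hne, ⟨m, hm, he⟩ | ⟨m, hm, he⟩⟩ := hadj
        · -- y = x ^ m
          have hpm := pow_mod_orderOf x m
          rw [hx] at hpm
          have hy2 : y = x ^ (m % 2) := by rw [hpm]; exact he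
          have hm2 : m % 2 = 0 ∨ m % 2 = 1 := by omega
          rcases hm2 with e | e
          · rw [e, pow_zero] at hy2; exact hy hy2
          · rw [e, pow_one] at hy2; exact hne hy2.symm
        · -- x = y ^ m
          rcases hord23 y hy with h2 | h3
          · have hpm := pow_mod_orderOf y m
            rw [h2] at hpm
            have hy2 : x = y ^ (m % 2) := by rw [hpm]; exact he
            have hm2 : m % 2 = 0 ∨ m % 2 = 1 := by omega
            rcases hm2 with e | e
            · rw [e, pow_zero] at hy2; exact hx1 hy2
            · rw [e, pow_one] at hy2; exact hne hy2
          · have hdd : orderOf ((y : G) ^ m) ∣ orderOf y := orderOf_pow_dvd m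
            rw [← he, hx, h3] at hdd
            norm_num at hdd
      -- every vertex is x
      have hall : ∀ v : {g : G // g ≠ 1}, v = ⟨x, hx1⟩ := by
        intro v
        obtain ⟨w⟩ := (h.isConnected.preconnected ⟨x, hx1⟩ v)
        exact walk_preserve (fun u => u = ⟨x, hx1⟩)
          (fun u v hu hadj => absurd (hu ▸ hadj) (hiso v)) w rfl
      have hcard : Fintype.card G = 2 := by
        have huniv : (Finset.univ : Finset G) = {1, x} := by
          ext g
          simp only [Finset.mem_univ, Finset.mem_insert, Finset.mem_singleton, true_iff]
          by_cases hg : g = 1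
          · exact Or.inl hg
          · exact Or.inr (congrArg Subtype.val (hall ⟨g, hg⟩))
        rw [Fintype.card, huniv]
        rw [Finset.card_insert_of_notMem (by simpa using hx1.symm), Finset.card_singleton]
      haveI : Fact (Nat.Prime 2) := ⟨by norm_num⟩
      exact ⟨isCyclic_of_prime_card (p := 2) (by rw [Nat.card_eq_fintype_card]; exact hcard), Or.inl hcard⟩
    · -- all nonidentity elements have order 3
      push_neg at hx2
      have hord3 : ∀ g : G, g ≠ 1 → orderOf g = 3 := fun g hg =>
        (hord23 g hg).resolve_left (hx2 g)
      have hsq : ∀ g : G, g ≠ 1 → g ^ 2 = g⁻¹ := by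
        intro g hg
        apply eq_inv_of_mul_eq_one_left
        rw [← pow_succ]
        have : g ^ 3 = 1 := by rw [← hord3 g hg]; exact pow_orderOf_eq_one g
        exact this
      -- any neighbor of u is u⁻¹
      have hnbr : ∀ u v : {g : G // g ≠ 1}, (powerGraphStar G).Adj u v →
          (v : G) = (u : G)⁻¹ := by
        rintro ⟨y, hy⟩ ⟨z, hz⟩ hadj
        rw [pgs_adj_s13] at hadj
        obtain ⟨hne, ⟨m, hm, he⟩ | ⟨m, hm, he⟩⟩ := hadj
        · have hpm := pow_mod_orderOf y m
          rw [hord3 y hy] at hpm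
          have hz2 : z = y ^ (m % 3) := by rw [hpm]; exact he
          have hm3 : m % 3 = 0 ∨ m % 3 = 1 ∨ m % 3 = 2 := by omega
          rcases hm3 with e | e | e <;> rw [e] at hz2
          · rw [pow_zero] at hz2; exact absurd hz2 hz
          · rw [pow_one] at hz2; exact absurd hz2.symm hne
          · show z = y⁻¹; rw [hz2, hsq y hy]
        · have hpm := pow_mod_orderOf z m
          rw [hord3 z hz] at hpm
          have hy2 : y = z ^ (m % 3) := by rw [hpm]; exact he
          have hm3 : m % 3 = 0 ∨ m % 3 = 1 ∨ m % 3 = 2 := by omega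
          rcases hm3 with e | e | e <;> rw [e] at hy2
          · rw [pow_zero] at hy2; exact absurd hy2 hy
          · rw [pow_one] at hy2; exact absurd hy2 hne
          · show z = y⁻¹
            rw [hy2, hsq z hz]
            simp
      obtain ⟨x, hx1⟩ := exists_ne (1 : G)
      have hxinv1 : x⁻¹ ≠ 1 := inv_ne_one.mpr hx1
      have hxne : x ≠ x⁻¹ := by
        intro e
        have h2 : x ^ 2 = 1 := by rw [pow_two]; nth_rewrite 2 [e]; simp
        have := Nat.le_of_dvd (by norm_num) (orderOf_dvd_of_pow_eq_one h2)
        rw [hord3 x hx1] at this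
        omega
      have hall : ∀ v : {g : G // g ≠ 1}, (v : G) = x ∨ (v : G) = x⁻¹ := by
        intro v
        obtain ⟨w⟩ := (h.isConnected.preconnected ⟨x, hx1⟩ v)
        refine walk_preserve (fun u : {g : G // g ≠ 1} => (u : G) = x ∨ (u : G) = x⁻¹) ?_ w (Or.inl rfl)
        intro u v hu hadj
        have := hnbr u v hadj
        rcases hu with e | e
        · right; rw [this, e]
        · left; rw [this, e, inv_inv]
      have hcard : Fintype.card G = 3 := by
        have huniv : (Finset.univ : Finset G) = {1, x, x⁻¹} := by
          ext g
          simp only [Finset.mem_univ, Finset.mem_insert, Finset.mem_singleton, true_iff]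
          by_cases hg : g = 1
          · exact Or.inl hg
          · exact Or.inr (hall ⟨g, hg⟩)
        rw [Fintype.card, huniv]
        rw [Finset.card_insert_of_notMem (by simp [hx1.symm, hxinv1.symm]),
          Finset.card_insert_of_notMem (by simpa using hxne), Finset.card_singleton]
      haveI : Fact (Nat.Prime 3) := ⟨by norm_num⟩
      exact ⟨isCyclic_of_prime_card (p := 3) (by rw [Nat.card_eq_fintype_card]; exact hcard), Or.inr hcard⟩
  · rintro ⟨hc, h2 | h3⟩
    · -- |G| = 2
      obtain ⟨x, hx1⟩ := exists_ne (1 : G)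
      have hcardv : Fintype.card {g : G // g ≠ 1} = 1 := by
        have := Fintype.card_subtype_compl (fun g : G => g = 1)
        simp only [Fintype.card_subtype_eq] at this
        have e : Fintype.card {g : G // g ≠ 1} = Fintype.card {g : G // ¬ g = 1} := rfl
        rw [e, this, h2]
      haveI : Subsingleton {g : G // g ≠ 1} := Fintype.card_le_one_iff_subsingleton.mp (by omega)
      haveI : Nonempty {g : G // g ≠ 1} := ⟨⟨x, hx1⟩⟩
      constructor
      · exact SimpleGraph.Connected.mk (fun u v => by rw [Subsingleton.elim u v])
      · exact acyclic_of_card_le_two (by omega) _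
    · -- |G| = 3
      have hord3 : ∀ g : G, g ≠ 1 → orderOf g = 3 := by
        intro g hg
        have hdvd : orderOf g ∣ 3 := h3 ▸ orderOf_dvd_card
        have h1 : orderOf g ≠ 1 := by simpa [orderOf_eq_one_iff] using hg
        rcases (Nat.prime_three.eq_one_or_self_of_dvd _ hdvd) with e | e
        · exact absurd e h1
        · exact e
      have hsq1 : ∀ g : G, g ≠ 1 → g ^ 2 ≠ 1 := by
        intro g hg e
        have := Nat.le_of_dvd (by norm_num) (orderOf_dvd_of_pow_eq_one e)
        rw [hord3 g hg] at this
        omega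
      have hkey : ∀ y z : G, y ≠ 1 → z ≠ 1 → y ≠ z → z = y ^ 2 := by
        intro y z hy hz hne
        have hyne2 : y ≠ y ^ 2 := by
          intro e
          apply hy
          have : y * 1 = y * y := by rw [mul_one]; rw [pow_two] at e; exact e
          exact (mul_left_cancel this).symm
        have huniv : ({1, y, y ^ 2} : Finset G) = Finset.univ := by
          apply Finset.eq_univ_of_card
          rw [Finset.card_insert_of_notMem (by simp [hy.symm, (hsq1 y hy).symm]),
            Finset.card_insert_of_notMem (by simpa using hyne2), Finset.card_singleton, h3]
        have : z ∈ ({1, y, y ^ 2} : Finset G) := huniv ▸ Finset.mem_univ z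
        simp only [Finset.mem_insert, Finset.mem_singleton] at this
        rcases this with e | e | e
        · exact absurd e hz
        · exact absurd e.symm hne
        · exact e
      have hcardv : Fintype.card {g : G // g ≠ 1} = 2 := by
        have := Fintype.card_subtype_compl (fun g : G => g = 1)
        simp only [Fintype.card_subtype_eq] at this
        have e : Fintype.card {g : G // g ≠ 1} = Fintype.card {g : G // ¬ g = 1} := rfl
        rw [e, this, h3]
      obtain ⟨x, hx1⟩ := exists_ne (1 : G)
      haveI : Nonempty {g : G // g ≠ 1} := ⟨⟨x, hx1⟩⟩
      constructor
      · refine SimpleGraph.Connected.mk ?_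
        rintro ⟨y, hy⟩ ⟨z, hz⟩
        by_cases hne : y = z
        · subst hne
          rfl
        · exact (pgs_adj_s13.mpr ⟨hne, Or.inl ⟨2, by norm_num, hkey y z hy hz hne⟩⟩).reachable
      · exact acyclic_of_card_le_two (by omega) _
end

section
/- Let G be a nontrivial finite group. If P*(G) is planar, then every element of G has order at most 6 and no element has order 10 or 12; equivalently the set of element orders is contained in {1, 2, 3, 4, 5, 6}. -/
/-- `Γ` contains a subdivision of `H`: there are branch vertices (an injection of the
vertices of `H`) and internally disjoint paths joining the images of the endpoints of
each edge of `H`, whose internal vertices are new. -/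
def HasSubdivision {V W : Type*} (Γ : SimpleGraph V) (H : SimpleGraph W) : Prop :=
  ∃ (f : W ↪ V) (p : ∀ a b : W, H.Adj a b → Γ.Walk (f a) (f b)),
    (∀ a b (h : H.Adj a b), (p a b h).IsPath) ∧
    (∀ a b (h : H.Adj a b), ∀ v ∈ (p a b h).support,
      v ∈ Set.range f → v = f a ∨ v = f b) ∧
    (∀ a b c d (h₁ : H.Adj a b) (h₂ : H.Adj c d), s(a, b) ≠ s(c, d) →
      ∀ v, v ∈ (p a b h₁).support → v ∈ (p c d h₂).support →
        (v = f a ∨ v = f b) ∧ (v = f c ∨ v = f d))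

/-- Planarity via Kuratowski's theorem: no subdivision of `K₅` or `K₃,₃`. -/
def IsPlanar {V : Type*} (Γ : SimpleGraph V) : Prop :=
  ¬ HasSubdivision Γ (SimpleGraph.completeGraph (Fin 5)) ∧
    ¬ HasSubdivision Γ (completeBipartiteGraph (Fin 3) (Fin 3))

/-- A 5-clique gives a (trivial) subdivision of K₅. -/
lemma hasSubdivision_of_clique {V : Type*} (Γ : SimpleGraph V) (v : Fin 5 → V)
    (hv : ∀ i j, i ≠ j → Γ.Adj (v i) (v j)) :
    HasSubdivision Γ (SimpleGraph.completeGraph (Fin 5)) := by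
  have hinj : Function.Injective v := by
    intro i j hij
    by_contra hne
    exact (hv i j hne).ne hij
  refine ⟨⟨v, hinj⟩, fun a b h => SimpleGraph.Walk.cons (hv a b h) SimpleGraph.Walk.nil,
    ?_, ?_, ?_⟩
  · intro a b h
    exact (SimpleGraph.Path.singleton (hv a b h)).2
  · intro a b h x hx _
    simp only [SimpleGraph.Walk.support_cons, SimpleGraph.Walk.support_nil,
      List.mem_cons, List.mem_singleton] at hx
    rcases hx with rfl | rfl | h'
    · exact Or.inl rfl
    · exact Or.inr rfl
    · exact absurd h' List.not_mem_nil
  · intro a b c d h₁ h₂ _ x hx₁ hx₂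
    simp only [SimpleGraph.Walk.support_cons, SimpleGraph.Walk.support_nil,
      List.mem_cons, List.mem_singleton] at hx₁ hx₂
    constructor
    · rcases hx₁ with rfl | rfl | h'
      · exact Or.inl rfl
      · exact Or.inr rfl
      · exact absurd h' List.not_mem_nil
    · rcases hx₂ with rfl | rfl | h'
      · exact Or.inl rfl
      · exact Or.inr rfl
      · exact absurd h' List.not_mem_nil

section Group
variable {G : Type*} [Group G]

lemma pow_ne_one_aux (x : G) {d a : ℕ} (hx : orderOf x = d) (h0 : 0 < a) (hlt : a < d) :
    x ^ a ≠ 1 := by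
  intro h1
  have := orderOf_dvd_of_pow_eq_one h1
  rw [hx] at this
  exact absurd (Nat.le_of_dvd h0 this) (not_le.mpr hlt)

/-- If `b` is coprime to the order `d ≥ 2`, then any power of `x` is a positive power of `x^b`. -/
lemma exists_pow_eq (x : G) {d b : ℕ} (hx : orderOf x = d) (hd : 1 < d)
    (hb : Nat.Coprime b d) (a : ℕ) : ∃ m : ℕ, 0 < m ∧ x ^ a = (x ^ b) ^ m := by
  obtain ⟨c, -, hc⟩ := Nat.exists_mul_mod_eq_one_of_coprime hb hd
  refine ⟨c * a + d, ?_, ?_⟩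
  · positivity
  · rw [← pow_mul]
    rw [pow_eq_pow_iff_modEq, hx]
    have h1 : b * c ≡ 1 [MOD d] := by
      unfold Nat.ModEq
      simpa [Nat.one_mod_eq_one.mpr (Nat.ne_of_gt hd)] using hc
    have h2 : b * c * a ≡ 1 * a [MOD d] := h1.mul_right a
    have h3 : b * d ≡ 0 [MOD d] := (Nat.modEq_zero_iff_dvd).mpr (dvd_mul_left d b)
    have key : b * (c * a + d) ≡ a [MOD d] := by
      calc b * (c * a + d) = b * c * a + b * d := by ring
        _ ≡ 1 * a + 0 [MOD d] := h2.add h3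
        _ = a := by ring
    exact key.symm

lemma clique_of_exponents (x : G) (d : ℕ) (hd : 1 < d) (hx : orderOf x = d)
    (e : Fin 5 → ℕ)
    (he : ∀ i, 0 < e i ∧ e i < d) (hne : ∀ i j, i ≠ j → e i ≠ e j)
    (hcop : ∀ i j, i ≠ j → Nat.Coprime (e i) d ∨ Nat.Coprime (e j) d) :
    ∃ v : Fin 5 → {g : G // g ≠ 1}, ∀ i j, i ≠ j → (powerGraphStar G).Adj (v i) (v j) := by
  refine ⟨fun i => ⟨x ^ e i, pow_ne_one_aux x hx (he i).1 (he i).2⟩, ?_⟩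
  intro i j hij
  have hxy : x ^ e i ≠ x ^ e j := by
    intro heq
    rw [pow_eq_pow_iff_modEq, hx, Nat.ModEq,
      Nat.mod_eq_of_lt (he i).2, Nat.mod_eq_of_lt (he j).2] at heq
    exact hne i j hij heq
  refine (⟨hxy, ?_⟩ : (powerGraph G).Adj (x ^ e i) (x ^ e j))
  rcases hcop i j hij with hc | hc
  · obtain ⟨m, hm, heq⟩ := exists_pow_eq x hx hd hc (e j)
    exact Or.inl ⟨m, hm, heq⟩
  · obtain ⟨m, hm, heq⟩ := exists_pow_eq x hx hd hc (e i)
    exact Or.inr ⟨m, hm, heq⟩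

end Group

/-- covering lemma: every n ≥ 7 has a divisor which is a prime ≥ 7 or in {8,9,25,10,12,15}. -/
lemma covering {n : ℕ} (hn : 7 ≤ n) :
    ∃ d, d ∣ n ∧ ((Nat.Prime d ∧ 7 ≤ d) ∨ d ∈ ({8, 9, 25, 10, 12, 15} : Finset ℕ)) := by
  by_cases hp : ∃ p, p.Prime ∧ p ∣ n ∧ 7 ≤ p
  · obtain ⟨p, h1, h2, h3⟩ := hp
    exact ⟨p, h2, Or.inl ⟨h1, h3⟩⟩
  by_cases h8 : 8 ∣ n
  · exact ⟨8, h8, Or.inr (by decide)⟩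
  by_cases h9 : 9 ∣ n
  · exact ⟨9, h9, Or.inr (by decide)⟩
  by_cases h25 : 25 ∣ n
  · exact ⟨25, h25, Or.inr (by decide)⟩
  push_neg at hp
  have hn0 : n ≠ 0 := by omega
  -- n divides 60
  have hdvd : n ∣ 60 := by
    rw [← Nat.factorization_le_iff_dvd hn0 (by norm_num)]
    intro p
    by_cases hpp : p.Prime
    · by_cases hpd : p ∣ n
      · have hp6 : p ≤ 6 := by have := hp p hpp hpd; omega
        have hmem : p = 2 ∨ p = 3 ∨ p = 5 := by
          interval_cases p <;> revert hpp <;> decide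
        have key : ∀ q k : ℕ, q.Prime → ¬ q ^ k ∣ n → n.factorization q < k := by
          intro q k hq hndvd
          by_contra hge
          exact hndvd ((Nat.Prime.pow_dvd_iff_le_factorization hq hn0).mpr (le_of_not_gt hge))
        have key60 : ∀ q k : ℕ, q.Prime → q ^ k ∣ 60 → k ≤ (60 : ℕ).factorization q := by
          intro q k hq hdv
          exact (Nat.Prime.pow_dvd_iff_le_factorization hq (by norm_num)).mp hdv
        rcases hmem with rfl | rfl | rfl
        · have h1 := key 2 3 (by norm_num) h8
          have h2 := key60 2 2 (by norm_num) (by norm_num)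
          omega
        · have h1 := key 3 2 (by norm_num) h9
          have h2 := key60 3 1 (by norm_num) (by norm_num)
          omega
        · have h1 := key 5 2 (by norm_num) h25
          have h2 := key60 5 1 (by norm_num) (by norm_num)
          omega
      · simp [Nat.factorization_eq_zero_of_not_dvd hpd]
    · simp [Nat.factorization_eq_zero_of_not_prime _ hpp]
  have hle : n ≤ 60 := Nat.le_of_dvd (by norm_num) hdvd
  have : 10 ∣ n ∨ 12 ∣ n ∨ 15 ∣ n := by
    interval_cases n <;> revert hdvd <;> decide
  rcases this with h | h | h
  · exact ⟨10, h, Or.inr (by decide)⟩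
  · exact ⟨12, h, Or.inr (by decide)⟩
  · exact ⟨15, h, Or.inr (by decide)⟩

theorem orders_le_six_of_planar (G : Type*) [Group G] [Fintype G] [Nontrivial G]
    (h : IsPlanar (powerGraphStar G)) :
    ∀ g : G, orderOf g ∈ ({1, 2, 3, 4, 5, 6} : Set ℕ) := by
  intro g
  by_contra hmem
  simp only [Set.mem_insert_iff, Set.mem_singleton_iff, not_or] at hmem
  set n := orderOf g with hn
  have hpos : 0 < n := orderOf_pos g
  have hn7 : 7 ≤ n := by omega
  obtain ⟨d, hdvd, hcase⟩ := covering hn7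
  -- the element of order d
  set x := g ^ (n / d) with hxdef
  have hd1 : 1 < d := by
    rcases hcase with ⟨hp, h7⟩ | hmem' <;> [omega; (fin_cases hmem' <;> norm_num)]
  have hx : orderOf x = d := by
    rw [hxdef, orderOf_pow, ← hn]
    rw [Nat.gcd_eq_right (Nat.div_dvd_of_dvd hdvd)]
    exact Nat.div_div_self hdvd (by omega)
  -- get the clique
  have hclique : ∃ v : Fin 5 → {g' : G // g' ≠ 1},
      ∀ i j, i ≠ j → (powerGraphStar G).Adj (v i) (v j) := by
    rcases hcase with ⟨hp, h7⟩ | hmem'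
    · have hb : ∀ i : Fin 5, 1 ≤ (![1, 2, 3, 4, 5] : Fin 5 → ℕ) i ∧
          (![1, 2, 3, 4, 5] : Fin 5 → ℕ) i ≤ 5 := by decide
      refine clique_of_exponents x d hd1 hx ![1, 2, 3, 4, 5] ?_ (by decide) ?_
      · intro i
        exact ⟨by have := (hb i).1; omega, by have := (hb i).2; omega⟩
      · intro i j _
        left
        refine (hp.coprime_iff_not_dvd.mpr (fun hdv => ?_)).symm
        have h1 := (hb i).1
        have h2 := (hb i).2
        have := Nat.le_of_dvd (by omega) hdv
        omega
    · fin_cases hmem'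
      · exact clique_of_exponents x 8 hd1 hx ![1, 3, 5, 7, 2] (by decide) (by decide) (by decide)
      · exact clique_of_exponents x 9 hd1 hx ![1, 2, 4, 5, 7] (by decide) (by decide) (by decide)
      · exact clique_of_exponents x 25 hd1 hx ![1, 2, 3, 4, 6] (by decide) (by decide) (by decide)
      · exact clique_of_exponents x 10 hd1 hx ![1, 3, 7, 9, 2] (by decide) (by decide) (by decide)
      · exact clique_of_exponents x 12 hd1 hx ![1, 5, 7, 11, 2] (by decide) (by decide) (by decide)
      · exact clique_of_exponents x 15 hd1 hx ![1, 2, 4, 7, 8] (by decide) (by decide) (by decide)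
  obtain ⟨v, hv⟩ := hclique
  exact h.1 (hasSubdivision_of_clique _ v hv)
end

section
/- Let G be a finite cyclic group of order n ≥ 2. Then P*(G) is Eulerian if and only if n is a power of 2. -/
lemma even_card_of_invol_aux {α : Type*} [DecidableEq α] :
    ∀ (n : ℕ) (s : Finset α) (f : α → α), s.card = n →
    (∀ a ∈ s, f a ∈ s) → (∀ a ∈ s, f (f a) = a) → (∀ a ∈ s, f a ≠ a) →
    Even s.card := by
  intro n
  induction n using Nat.strong_induction_on with
  | _ n ih =>
    intro s f hcard h1 h2 h3
    rcases s.eq_empty_or_nonempty with rfl | ⟨a, ha⟩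
    · simp
    · have hfa := h1 a ha
      have hne := h3 a ha
      set t := (s.erase a).erase (f a) with ht
      have hmem : ∀ x, x ∈ t ↔ x ∈ s ∧ x ≠ f a ∧ x ≠ a := by
        intro x; simp [ht, Finset.mem_erase]; tauto
      have hcard2 : s.card = t.card + 2 := by
        have h1' : (s.erase a).card = s.card - 1 := Finset.card_erase_of_mem ha
        have hfa' : f a ∈ s.erase a := Finset.mem_erase.2 ⟨hne, hfa⟩
        have h2' : t.card = (s.erase a).card - 1 := Finset.card_erase_of_mem hfa'
        have hpos : 2 ≤ s.card := Finset.one_lt_card.2 ⟨a, ha, f a, hfa, fun h => hne h.symm⟩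
        omega
      have het : Even t.card := by
        refine ih t.card (by omega) t f rfl ?_ ?_ ?_
        · intro x hx
          obtain ⟨hxs, hxfa, hxa⟩ := (hmem x).1 hx
          refine (hmem (f x)).2 ⟨h1 x hxs, ?_, ?_⟩
          · intro h; exact hxa (by rw [← h2 x hxs, h, h2 a ha])
          · intro h; exact hxfa (by rw [← h2 x hxs, h])
        · intro x hx; exact h2 x ((hmem x).1 hx).1
        · intro x hx; exact h3 x ((hmem x).1 hx).1
      obtain ⟨c, hc⟩ := het
      exact ⟨c + 1, by omega⟩

lemma even_ncard_of_invol {α : Type*} (s : Set α) (hs : s.Finite) (f : α → α)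
    (h1 : ∀ a ∈ s, f a ∈ s) (h2 : ∀ a ∈ s, f (f a) = a) (h3 : ∀ a ∈ s, f a ≠ a) :
    Even s.ncard := by
  classical
  have := hs.fintype
  rw [Set.ncard_eq_toFinset_card']
  exact even_card_of_invol_aux _ _ f rfl (by simp_all) (by simp_all) (by simp_all)

lemma mem_zpowers_iff_pos_pow {G : Type*} [Group G] [Fintype G] (x y : G) :
    (∃ m : ℕ, 0 < m ∧ y = x ^ m) ↔ y ∈ Subgroup.zpowers x := by
  constructor
  · rintro ⟨m, -, rfl⟩
    exact Subgroup.npow_mem_zpowers x m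
  · intro hy
    have hfo : IsOfFinOrder x := isOfFinOrder_of_finite x
    obtain ⟨n, hn⟩ := hfo.mem_powers_iff_mem_zpowers.2 hy
    have hn' : x ^ n = y := hn
    have hord := orderOf_pos x
    exact ⟨n + orderOf x, by omega, by rw [pow_add, pow_orderOf_eq_one, mul_one, ← hn']⟩

lemma powerGraphStar_adj {G : Type*} [Group G] [Fintype G] (x y : G) (hx : x ≠ 1) (hy : y ≠ 1) :
    (powerGraphStar G).Adj ⟨x, hx⟩ ⟨y, hy⟩ ↔
      x ≠ y ∧ (y ∈ Subgroup.zpowers x ∨ x ∈ Subgroup.zpowers y) := by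
  show (x ≠ y ∧ _) ↔ _
  rw [mem_zpowers_iff_pos_pow, mem_zpowers_iff_pos_pow]
  exact Iff.rfl
lemma no_self_inv {G : Type*} [Group G] (x y : G) (hx : x ≠ 1) (hinv : y⁻¹ = y)
    (hxy : x ∈ Subgroup.zpowers y) (hyx : y ∉ Subgroup.zpowers x) : False := by
  have hy2 : y ^ (2:ℤ) = 1 := by
    rw [zpow_two]; nth_rewrite 1 [← hinv]; exact inv_mul_cancel y
  have hpow : ∀ k : ℤ, y ^ k = 1 ∨ y ^ k = y := by
    intro k
    rcases Int.even_or_odd k with ⟨c, rfl⟩ | ⟨c, rfl⟩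
    · left; rw [show c + c = 2 * c by ring, zpow_mul, hy2, one_zpow]
    · right; rw [zpow_add, zpow_one, zpow_mul, hy2, one_zpow, one_mul]
  obtain ⟨k, hk⟩ := hxy
  have hk' : y ^ k = x := hk
  rcases hpow k with h | h
  · exact hx (by rw [← hk', h])
  · exact hyx (by rw [← hk', h]; exact Subgroup.mem_zpowers y)

lemma even_deg_iff {G : Type*} [Group G] [Fintype G] (x : G) (hx : x ≠ 1) :
    Even (((powerGraphStar G).neighborSet ⟨x, hx⟩).ncard) ↔ Even (orderOf x) := by
  classical
  set d := orderOf x with hd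
  have hd2 : 2 ≤ d := by
    have h1 : d ≠ 1 := fun h => hx (orderOf_eq_one_iff.1 h)
    have h0 := orderOf_pos x
    omega
  set N : Set {g : G // g ≠ 1} := (powerGraphStar G).neighborSet ⟨x, hx⟩ with hN
  set N' : Set G := Subtype.val '' N with hN'
  have hcard : N.ncard = N'.ncard := (Set.ncard_image_of_injective N Subtype.val_injective).symm
  have hmemN' : ∀ y : G,
      y ∈ N' ↔ y ≠ 1 ∧ x ≠ y ∧ (y ∈ Subgroup.zpowers x ∨ x ∈ Subgroup.zpowers y) := by
    intro y
    constructor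
    · rintro ⟨⟨y, hy1⟩, hmem, rfl⟩
      have := (powerGraphStar_adj x y hx hy1).1 hmem
      exact ⟨hy1, this.1, this.2⟩
    · rintro ⟨hy1, hne, hor⟩
      exact ⟨⟨y, hy1⟩, (powerGraphStar_adj x y hx hy1).2 ⟨hne, hor⟩, rfl⟩
  set A : Set G := (Subgroup.zpowers x : Set G) \ {1, x} with hA
  set B : Set G := {y | y ∉ Subgroup.zpowers x ∧ x ∈ Subgroup.zpowers y} with hB
  have hsplit : N' = A ∪ B := by
    ext y
    rw [hmemN']
    constructor
    · rintro ⟨hy1, hne, hor⟩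
      by_cases h : y ∈ Subgroup.zpowers x
      · exact Or.inl ⟨h, by rintro (rfl | rfl); exacts [hy1 rfl, hne rfl]⟩
      · rcases hor with h' | h'
        · exact absurd h' h
        · exact Or.inr ⟨h, h'⟩
    · rintro (⟨hyz, hy⟩ | ⟨hyz, hy⟩)
      · simp only [Set.mem_insert_iff, Set.mem_singleton_iff] at hy
        push_neg at hy
        exact ⟨hy.1, fun h => hy.2 h.symm, Or.inl hyz⟩
      · have hy1 : y ≠ 1 := by
          rintro rfl
          rw [Subgroup.zpowers_one_eq_bot, Subgroup.mem_bot] at hy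
          exact hx hy
        refine ⟨hy1, ?_, Or.inr hy⟩
        rintro rfl
        exact hyz (Subgroup.mem_zpowers _)
  have hdisj : Disjoint A B := by
    rw [Set.disjoint_left]; rintro a ⟨ha, -⟩ ⟨hb, -⟩; exact hb ha
  have hAcard : A.ncard = d - 2 := by
    have hsub : ({1, x} : Set G) ⊆ (Subgroup.zpowers x : Set G) := by
      rintro a (rfl | rfl)
      · exact Subgroup.one_mem _
      · exact Subgroup.mem_zpowers _
    have hz : (Subgroup.zpowers x : Set G).ncard = d := by
      rw [hd]
      simpa [Set.ncard_eq_toFinset_card'] using Nat.card_zpowers x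
    rw [hA, Set.ncard_diff hsub (Set.toFinite _), hz, Set.ncard_pair (Ne.symm hx)]
  have hBeven : Even B.ncard := by
    refine even_ncard_of_invol B (Set.toFinite _) (fun y => y⁻¹) ?_ ?_ ?_
    · rintro y ⟨h1, h2⟩
      refine ⟨fun h => h1 ((Subgroup.inv_mem_iff _).1 h), ?_⟩
      rw [Subgroup.zpowers_inv]
      exact h2
    · intro a _; exact inv_inv a
    · rintro y ⟨h1, h2⟩ h
      exact no_self_inv x y hx h h2 h1
  have hfin : N.ncard = (d - 2) + B.ncard := by
    rw [hcard, hsplit, Set.ncard_union_eq hdisj (Set.toFinite _) (Set.toFinite _), hAcard]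
  rw [hfin, Nat.even_add, Nat.even_sub hd2]
  simp [hBeven]

theorem powerGraphStar_eulerian_iff (G : Type*) [Group G] [Fintype G] (hG : IsCyclic G)
    (n : ℕ) (hn : Fintype.card G = n) (h2 : 2 ≤ n) :
    ((powerGraphStar G).Connected ∧
      ∀ v : {g : G // g ≠ 1}, Even (((powerGraphStar G).neighborSet v).ncard)) ↔
      ∃ k : ℕ, n = 2 ^ k := by
  classical
  have hnontriv : Nontrivial G := by
    rw [← Fintype.one_lt_card_iff_nontrivial]; omega
  obtain ⟨g, hg⟩ := hG
  have hg1 : g ≠ 1 := by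
    rintro rfl
    obtain ⟨a, ha⟩ := exists_ne (1 : G)
    obtain ⟨k, hk⟩ := hg a
    have hk' : (1 : G) ^ k = a := hk
    exact ha (by rw [← hk', one_zpow])
  have hconn : (powerGraphStar G).Connected := by
    rw [SimpleGraph.connected_iff]
    have key : ∀ w : {g : G // g ≠ 1}, w ≠ ⟨g, hg1⟩ → (powerGraphStar G).Adj ⟨g, hg1⟩ w := by
      rintro ⟨w, hw⟩ hne
      refine (powerGraphStar_adj g w hg1 hw).2 ⟨?_, Or.inl (hg w)⟩
      intro h; exact hne (Subtype.ext h.symm)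
    refine ⟨?_, ⟨⟨g, hg1⟩⟩⟩
    intro u v
    by_cases hu : u = ⟨g, hg1⟩
    · by_cases hv : v = ⟨g, hg1⟩
      · rw [hu, hv]
      · rw [hu]; exact (key v hv).reachable
    · by_cases hv : v = ⟨g, hg1⟩
      · rw [hv]; exact ((key u hu).symm).reachable
      · exact ((key u hu).symm.reachable).trans (key v hv).reachable
  constructor
  · rintro ⟨-, hdeg⟩
    have hall : ∀ {p : ℕ}, p.Prime → p ∣ n → p = 2 := by
      intro p hp hpn
      haveI := Fact.mk hp
      obtain ⟨x, hxord⟩ := exists_prime_orderOf_dvd_card p (by rwa [hn])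
      have hx1 : x ≠ 1 := by
        intro h
        rw [h, orderOf_one] at hxord
        exact hp.one_lt.ne' hxord.symm
      have hev := (even_deg_iff x hx1).1 (hdeg ⟨x, hx1⟩)
      rw [hxord] at hev
      exact (Nat.Prime.even_iff hp).1 hev
    exact ⟨n.primeFactorsList.length,
      Nat.eq_prime_pow_of_unique_prime_dvd (by omega) (fun hd hdn => hall hd hdn)⟩
  · rintro ⟨k, rfl⟩
    refine ⟨hconn, ?_⟩
    rintro ⟨x, hx1⟩
    rw [even_deg_iff x hx1]
    have hdvd : orderOf x ∣ 2 ^ k := by rw [← hn]; exact orderOf_dvd_card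
    obtain ⟨j, hj, hje⟩ := (Nat.dvd_prime_pow Nat.prime_two).1 hdvd
    have hj0 : j ≠ 0 := by
      rintro rfl
      rw [pow_zero] at hje
      exact hx1 (orderOf_eq_one_iff.1 hje)
    rw [hje]
    exact (Nat.even_pow).2 ⟨even_two, hj0⟩
end

section
/- Let G be a finite group and Γ = P*(G). An edge e = {x, y} of Γ is a cut edge if and only if one of its endpoints, say x, has order 3 and the only element z of G with x ∈ ⟨z⟩ and z ≠ x is z = x^2 (equivalently, in the directed power graph on G \ {1}, x has in-degree 1 and out-degree 1). -/
section Aux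

variable {G : Type*} [Group G] [Fintype G]

private lemma exists_pos_pow_iff (x y : G) :
    (∃ m : ℕ, 0 < m ∧ y = x ^ m) ↔ y ∈ Subgroup.zpowers x := by
  constructor
  · rintro ⟨m, -, rfl⟩
    exact ⟨(m : ℤ), by simp⟩
  · intro h
    obtain ⟨n, rfl⟩ := mem_powers_iff_mem_zpowers.2 h
    rcases Nat.eq_zero_or_pos n with rfl | hn
    · exact ⟨orderOf x, orderOf_pos x, by simp [pow_orderOf_eq_one]⟩
    · exact ⟨n, hn, rfl⟩

private lemma pgs_adj_iff (a b : {g : G // g ≠ 1}) :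
    (powerGraphStar G).Adj a b ↔
      (a : G) ≠ (b : G) ∧
        ((b : G) ∈ Subgroup.zpowers (a : G) ∨ (a : G) ∈ Subgroup.zpowers (b : G)) := by
  show ((a : G) ≠ b ∧ _) ↔ _
  rw [exists_pos_pow_iff, exists_pos_pow_iff]
  exact Iff.rfl

private lemma not_isBridge_of_common {V : Type*} {Γ : SimpleGraph V} {x y z : V}
    (hxz : Γ.Adj x z) (hzy : Γ.Adj z y) (hxy : x ≠ y) : ¬ Γ.IsBridge s(x, y) := by
  rw [SimpleGraph.isBridge_iff]
  intro hnr
  apply hnr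
  have h1 : (Γ \ SimpleGraph.fromEdgeSet {s(x, y)}).Adj x z := by
    rw [SimpleGraph.sdiff_adj]
    refine ⟨hxz, ?_⟩
    simp only [SimpleGraph.fromEdgeSet_adj, Set.mem_singleton_iff, Sym2.eq_iff]
    rintro ⟨⟨-, rfl⟩ | ⟨rfl, rfl⟩, -⟩
    · exact hzy.ne rfl
    · exact hxy rfl
  have h2 : (Γ \ SimpleGraph.fromEdgeSet {s(x, y)}).Adj z y := by
    rw [SimpleGraph.sdiff_adj]
    refine ⟨hzy, ?_⟩
    simp only [SimpleGraph.fromEdgeSet_adj, Set.mem_singleton_iff, Sym2.eq_iff]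
    rintro ⟨⟨rfl, -⟩ | ⟨rfl, rfl⟩, -⟩
    · exact hxz.ne rfl
    · exact hxz.ne rfl
  exact h1.reachable.trans h2.reachable

private lemma mem_order3 {x w : G} (h3 : orderOf x = 3) (hw : w ∈ Subgroup.zpowers x)
    (h1 : w ≠ 1) (hx : w ≠ x) : w = x ^ 2 := by
  obtain ⟨n, hn⟩ := mem_powers_iff_mem_zpowers.2 hw
  have hn' : x ^ n = w := hn
  have hmod : x ^ (n % 3) = w := by rw [← hn', ← h3, pow_mod_orderOf]
  have hlt : n % 3 = 0 ∨ n % 3 = 1 ∨ n % 3 = 2 := by omega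
  rcases hlt with h | h | h <;> rw [h] at hmod
  · exact absurd (by rw [← hmod, pow_zero]) h1
  · exact absurd (by rw [← hmod, pow_one]) hx
  · exact hmod.symm

private lemma forward_aux {x y : {g : G // g ≠ 1}} (hxy : (powerGraphStar G).Adj x y)
    (hm : (y : G) ∈ Subgroup.zpowers (x : G)) (hb : (powerGraphStar G).IsBridge s(x, y)) :
    orderOf (x : G) = 3 ∧
      ∀ z : G, (x : G) ∈ Subgroup.zpowers z → z ≠ (x : G) → z = (x : G) ^ 2 := by
  have key : ∀ z : {g : G // g ≠ 1},
      (powerGraphStar G).Adj x z → (powerGraphStar G).Adj z y → False := by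
    intro z h1 h2
    exact not_isBridge_of_common h1 h2 hxy.ne hb
  have hne : (x : G) ≠ (y : G) := ((pgs_adj_iff x y).1 hxy).1
  have hxinv_ne1 : (x : G)⁻¹ ≠ 1 := by
    simpa [inv_eq_one] using x.2
  -- Step 1 : y = x⁻¹
  have hy_eq : (y : G) = (x : G)⁻¹ := by
    by_contra hne2
    rcases eq_or_ne ((x : G)⁻¹) (x : G) with h | h
    · -- order of x is 2, impossible since y ∈ ⟨x⟩ \ {1, x}
      have hx2 : (x : G) ^ 2 = 1 := by
        rw [pow_two]
        nth_rewrite 1 [← h]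
        exact inv_mul_cancel _
      have ho : orderOf (x : G) = 2 := orderOf_eq_prime hx2 x.2
      obtain ⟨n, hn⟩ := mem_powers_iff_mem_zpowers.2 hm
      have hn' : (x : G) ^ n = (y : G) := hn
      have hmod : (x : G) ^ (n % 2) = (y : G) := by rw [← hn', ← ho, pow_mod_orderOf]
      have h01 : n % 2 = 0 ∨ n % 2 = 1 := by omega
      rcases h01 with h0 | h0 <;> rw [h0] at hmod
      · exact y.2 (by rw [← hmod, pow_zero])
      · exact hne (by rw [← hmod, pow_one])
    · refine key ⟨(x : G)⁻¹, hxinv_ne1⟩ ?_ ?_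
      · rw [pgs_adj_iff]
        exact ⟨h.symm, Or.inl ⟨-1, by simp⟩⟩
      · rw [pgs_adj_iff]
        refine ⟨fun hh => hne2 hh.symm, Or.inl ?_⟩
        rw [Subgroup.zpowers_inv]
        exact hm
  have hn1 : orderOf (x : G) ≠ 1 := fun h => x.2 (orderOf_eq_one_iff.1 h)
  have hopos : 0 < orderOf (x : G) := orderOf_pos _
  have hn2 : orderOf (x : G) ≠ 2 := by
    intro h
    have hx2 : (x : G) ^ 2 = 1 := by rw [← h]; exact pow_orderOf_eq_one _
    have hinv : (x : G)⁻¹ = (x : G) := by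
      rw [pow_two] at hx2
      exact inv_eq_of_mul_eq_one_right hx2
    exact hne (by rw [hy_eq, hinv])
  have h3 : orderOf (x : G) = 3 := by
    by_contra h3
    have hx2 : (x : G) ^ 2 ≠ 1 := by
      intro hh
      have := Nat.le_of_dvd (by norm_num) (orderOf_dvd_of_pow_eq_one hh)
      omega
    have hx3 : (x : G) ^ 3 ≠ 1 := by
      intro hh
      have := Nat.le_of_dvd (by norm_num) (orderOf_dvd_of_pow_eq_one hh)
      omega
    refine key ⟨(x : G) ^ 2, hx2⟩ ?_ ?_
    · rw [pgs_adj_iff]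
      refine ⟨?_, Or.inl (Subgroup.npow_mem_zpowers _ 2)⟩
      intro hh
      have hh' : (x : G) = (x : G) ^ 2 := hh
      apply x.2
      have : (x : G) * (x : G) = (x : G) * 1 := by
        rw [mul_one, ← pow_two, ← hh']
      exact mul_left_cancel this
    · rw [pgs_adj_iff]
      constructor
      · intro hh
        apply hx3
        rw [hy_eq] at hh
        have hh' : (x : G) ^ 2 = (x : G)⁻¹ := hh
        calc (x : G) ^ 3 = (x : G) ^ 2 * x := by rw [pow_succ]
          _ = (x : G)⁻¹ * x := by rw [hh']
          _ = 1 := inv_mul_cancel _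
      · refine Or.inr ?_
        rw [hy_eq, Subgroup.zpowers_inv]
        exact Subgroup.npow_mem_zpowers _ 2
  refine ⟨h3, ?_⟩
  have hx3one : (x : G) ^ 3 = 1 := by rw [← h3]; exact pow_orderOf_eq_one _
  have hyx2 : (y : G) = (x : G) ^ 2 := by
    rw [hy_eq]
    refine inv_eq_of_mul_eq_one_right ?_
    rw [← pow_succ']
    exact hx3one
  intro z hz hzx
  by_contra hz2
  have hz1 : z ≠ 1 := by
    rintro rfl
    apply x.2
    simpa [Subgroup.zpowers_one_eq_bot] using hz
  refine key ⟨z, hz1⟩ ?_ ?_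
  · rw [pgs_adj_iff]
    exact ⟨hzx.symm, Or.inr hz⟩
  · rw [pgs_adj_iff]
    refine ⟨?_, Or.inl ?_⟩
    · rw [hyx2]; exact hz2
    · rw [hyx2, pow_two]
      exact (Subgroup.zpowers z).mul_mem hz hz

private lemma backward_aux {x y : {g : G // g ≠ 1}} (hxy : (powerGraphStar G).Adj x y)
    (h3 : orderOf (x : G) = 3)
    (hu : ∀ z : G, (x : G) ∈ Subgroup.zpowers z → z ≠ (x : G) → z = (x : G) ^ 2) :
    (powerGraphStar G).IsBridge s(x, y) := by
  have hne : (x : G) ≠ (y : G) := ((pgs_adj_iff x y).1 hxy).1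
  have huniq : ∀ w : {g : G // g ≠ 1}, (powerGraphStar G).Adj x w → (w : G) = (x : G) ^ 2 := by
    intro w hw
    rcases (pgs_adj_iff x w).1 hw with ⟨hnw, h | h⟩
    · exact mem_order3 h3 h w.2 (fun hh => hnw hh.symm)
    · exact hu w h (fun hh => hnw hh.symm)
  have hy2 : (y : G) = (x : G) ^ 2 := huniq y hxy
  rw [SimpleGraph.isBridge_iff]
  rintro ⟨p⟩
  cases p with
  | nil => exact hxy.ne rfl
  | @cons _ w _ h q =>
    rw [SimpleGraph.deleteEdges_adj] at h
    obtain ⟨h1, h2⟩ := h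
    have hwy : w = y := Subtype.ext ((huniq w h1).trans hy2.symm)
    subst hwy
    exact h2 (by simp [SimpleGraph.fromEdgeSet_adj, hxy.ne])

end Aux

theorem powerGraphStar_isBridge_iff (G : Type*) [Group G] [Fintype G]
    (x y : {g : G // g ≠ 1}) (hxy : (powerGraphStar G).Adj x y) :
    (powerGraphStar G).IsBridge s(x, y) ↔
      ((orderOf (x : G) = 3 ∧
          ∀ z : G, (x : G) ∈ Subgroup.zpowers z → z ≠ (x : G) → z = (x : G) ^ 2) ∨
        (orderOf (y : G) = 3 ∧
          ∀ z : G, (y : G) ∈ Subgroup.zpowers z → z ≠ (y : G) → z = (y : G) ^ 2)) := by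
  constructor
  · intro hb
    rcases (pgs_adj_iff x y).1 hxy with ⟨-, hm | hm⟩
    · exact Or.inl (forward_aux hxy hm hb)
    · refine Or.inr (forward_aux hxy.symm hm ?_)
      rwa [Sym2.eq_swap] at hb
  · rintro (⟨h3, hu⟩ | ⟨h3, hu⟩)
    · exact backward_aux hxy h3 hu
    · rw [Sym2.eq_swap]
      exact backward_aux hxy.symm h3 hu
end
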